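/- Let B be a DDSA with finite summary (Φ, ∼) for constraint set 𝒞, ψ ∈ L, and N_B^ψ the product automaton of B (extended with a dummy initial transition) and the NFA N_ψ. Then the language of N_B^ψ is non-empty if and only if there exists a run of B ending in a final state that satisfies ψ (a witness for ψ). -/

import Mathlib

namespace DDS

inductive Trm (X D : Type) where
  | var : X → Trm X D
  | const : D → Trm X D
  | add : Trm X D → Trm X D → Trm X D
  | sub : Trm X D → Trm X D → Trm X D

def Trm.eval {X D : Type} [Add D] [Sub D] (α : X → D) : Trm X D → D
  | .var x => α x
  | .const c => c
  | .add s t => s.eval α + t.eval α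
  | .sub s t => s.eval α - t.eval α

def Trm.vars {X D : Type} : Trm X D → Set X
  | .var x => {x}
  | .const _ => ∅
  | .add s t => s.vars ∪ t.vars
  | .sub s t => s.vars ∪ t.vars

def Trm.consts {X D : Type} : Trm X D → Set D
  | .var _ => ∅
  | .const c => {c}
  | .add s t => s.consts ∪ t.consts
  | .sub s t => s.consts ∪ t.consts

/-- Conjunctions of linear arithmetic constraints (Definition 1), with the
trivially true constraint `tru` (the empty conjunction). -/
inductive Constr (X D : Type) where
  | tru : Constr X D
  | eq : Trm X D → Trm X D → Constr X D
  | ne : Trm X D → Trm X D → Constr X D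
  | lt : Trm X D → Trm X D → Constr X D
  | le : Trm X D → Trm X D → Constr X D
  | and : Constr X D → Constr X D → Constr X D

def Constr.holds {X D : Type} [Add D] [Sub D] [LT D] [LE D] (α : X → D) :
    Constr X D → Prop
  | .tru => True
  | .eq s t => s.eval α = t.eval α
  | .ne s t => s.eval α ≠ t.eval α
  | .lt s t => s.eval α < t.eval α
  | .le s t => s.eval α ≤ t.eval α
  | .and c d => c.holds α ∧ d.holds α

def Constr.vars {X D : Type} : Constr X D → Set X
  | .tru => ∅
  | .eq s t => s.vars ∪ t.vars
  | .ne s t => s.vars ∪ t.vars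
  | .lt s t => s.vars ∪ t.vars
  | .le s t => s.vars ∪ t.vars
  | .and c d => c.vars ∪ d.vars

def Constr.consts {X D : Type} : Constr X D → Set D
  | .tru => ∅
  | .eq s t => s.consts ∪ t.consts
  | .ne s t => s.consts ∪ t.consts
  | .lt s t => s.consts ∪ t.consts
  | .le s t => s.consts ∪ t.consts
  | .and c d => c.consts ∪ d.consts

/-- A data-aware dynamic system with arithmetic (Definition 2).  Guards are
constraints over read variables (`Sum.inl`) and write variables (`Sum.inr`). -/
structure DDSA (B A X D : Type) where
  init : B
  trans : B → A → Option B
  final : Set B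
  a0 : X → D
  guard : A → Constr (X ⊕ X) D

variable {B A X D : Type} [Add D] [Sub D] [LT D] [LE D]

/-- `write(a)`: variables whose write copy occurs in the guard of `a`. -/
def DDSA.writes (M : DDSA B A X D) (a : A) : Set X :=
  {x | Sum.inr x ∈ (M.guard a).vars}

/-- Semantics of the transition formula
`Δ_a = guard(a) ∧ ⋀_{v ∉ write(a)} v^w = v^r`. -/
def DDSA.deltaHolds (M : DDSA B A X D) (a : A) (β : X ⊕ X → D) : Prop :=
  (M.guard a).holds β ∧ ∀ v, v ∉ M.writes a → β (Sum.inr v) = β (Sum.inl v)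

/-- A step `(b, α) →a (b', α')` of the DDSA. -/
def DDSA.step (M : DDSA B A X D) (b : B) (α : X → D) (a : A) (b' : B)
    (α' : X → D) : Prop :=
  M.trans b a = some b' ∧ (M.guard a).holds (Sum.elim α α') ∧
    ∀ v, v ∉ M.writes a → α' v = α v

/-- Symbolic runs: paths in the transition graph. -/
inductive DDSA.SymRun (M : DDSA B A X D) : B → List A → B → Prop where
  | nil (b : B) : DDSA.SymRun M b [] b
  | cons {b b' b'' : B} {a : A} {as : List A} :
      M.trans b a = some b' → DDSA.SymRun M b' as b'' →
      DDSA.SymRun M b (a :: as) b''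

/-- Runs with explicit intermediate assignments: each list entry records the
action taken and the assignment reached after it. -/
inductive DDSA.RunSteps (M : DDSA B A X D) :
    B → (X → D) → List (A × (X → D)) → B → Prop where
  | nil (b : B) (α : X → D) : DDSA.RunSteps M b α [] b
  | cons {b b' b'' : B} {α α' : X → D} {a : A} {l : List (A × (X → D))} :
      M.step b α a b' α' → DDSA.RunSteps M b' α' l b'' →
      DDSA.RunSteps M b α ((a, α') :: l) b''

/-- An assignment satisfies a set of constraints. -/
def csHolds (α : X → D) (C : Set (Constr X D)) : Prop := ∀ c ∈ C, c.holds α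

/-- Semantics of `update(φ, a) = ∃U. φ(U) ∧ Δ_a(U, V)`. -/
def DDSA.updateSem (M : DDSA B A X D) (P : (X → D) → Prop) (a : A) :
    (X → D) → Prop :=
  fun α' => ∃ α, P α ∧ M.deltaHolds a (Sum.elim α α')

/-- Semantics of `⋀(C_{α₀} ∪ C)`. -/
def DDSA.initPred (M : DDSA B A X D) (C : Set (Constr X D)) : (X → D) → Prop :=
  fun α => (∀ v, α v = M.a0 v) ∧ csHolds α C

/-- Semantics of the history constraint `hist(σ, C⃗)` (Definition 7), where
the symbolic run and the verification constraint sequence are paired up: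
`C0` is the constraint set attached to the initial position, and each list
entry pairs an action with the constraint set of the position it reaches. -/
def DDSA.hist (M : DDSA B A X D) (C0 : Set (Constr X D))
    (steps : List (A × Set (Constr X D))) : (X → D) → Prop :=
  steps.foldl (fun P p => fun α => M.updateSem P p.1 α ∧ csHolds α p.2)
    (M.initPred C0)

/-- Logical equivalence. -/
def eqv {X D : Type} (P Q : (X → D) → Prop) : Prop := ∀ α, P α ↔ Q α

/-- `P` is (equivalent to) a history constraint of `(M, CC)` whose symbolic
run ends in `b`. -/
def DDSA.HistoryOf (M : DDSA B A X D) (CC : Set (Constr X D)) (b : B)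
    (P : (X → D) → Prop) : Prop :=
  ∃ (C0 : Set (Constr X D)) (steps : List (A × Set (Constr X D))),
    C0 ⊆ CC ∧ (∀ p ∈ steps, p.2 ⊆ CC) ∧
    M.SymRun M.init (steps.map Prod.fst) b ∧ eqv P (M.hist C0 steps)

/-- The characterization of history sets from Lemma 2: closure under initial
constraints and under updates. -/
def DDSA.IsHistorySet (M : DDSA B A X D) (CC : Set (Constr X D))
    (Φ : Set (B × ((X → D) → Prop))) : Prop :=
  (∀ C ⊆ CC, ∃ Q, (M.init, Q) ∈ Φ ∧ eqv Q (M.initPred C)) ∧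
  (∀ b P, (b, P) ∈ Φ → ∀ a b', M.trans b a = some b' → ∀ C ⊆ CC,
    ∃ Q, (b', Q) ∈ Φ ∧ eqv Q (fun α => M.updateSem P a α ∧ csHolds α C))

/-- History sets (Definition 6): `Φ` contains, up to logical equivalence,
exactly the history constraints of `(M, CC)` paired with their end states. -/
def DDSA.IsHistorySetExact (M : DDSA B A X D) (CC : Set (Constr X D))
    (Φ : Set (B × ((X → D) → Prop))) : Prop :=
  (∀ b P, M.HistoryOf CC b P → ∃ Q, (b, Q) ∈ Φ ∧ eqv P Q) ∧
  (∀ b Q, (b, Q) ∈ Φ → M.HistoryOf CC b Q)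

/-- `(M, CC)` has finite summary; by Lemma 3 a finite history set suffices
(taking logical equivalence as the equivalence relation). -/
def DDSA.HasFiniteSummary (M : DDSA B A X D) (CC : Set (Constr X D)) : Prop :=
  ∃ Φ : Set (B × ((X → D) → Prop)), Φ.Finite ∧ M.IsHistorySet CC Φ

/-- The verification language `L` (constraints, states, conjunction,
disjunction, `⟨a⟩`, `⟨·⟩`, `◇`, `□`, `U`), after the preprocessing step that
introduces action propositions. -/
inductive LF (B A X D : Type) where
  | constr : Constr X D → LF B A X D
  | state : B → LF B A X D
  | act : A → LF B A X D
  | and : LF B A X D → LF B A X D → LF B A X D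
  | or : LF B A X D → LF B A X D → LF B A X D
  | diaA : A → LF B A X D → LF B A X D
  | next : LF B A X D → LF B A X D
  | ev : LF B A X D → LF B A X D
  | glob : LF B A X D → LF B A X D
  | untl : LF B A X D → LF B A X D → LF B A X D

/-- The constraint atoms occurring in a formula. -/
def LF.constrs {B A X D : Type} : LF B A X D → Set (Constr X D)
  | .constr c => {c}
  | .state _ => ∅
  | .act _ => ∅
  | .and f g => f.constrs ∪ g.constrs
  | .or f g => f.constrs ∪ g.constrs
  | .diaA _ f => f.constrs
  | .next f => f.constrs
  | .ev f => f.constrs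
  | .glob f => f.constrs
  | .untl f g => f.constrs ∪ g.constrs

/-- A finite run, represented by the list of its steps (action taken, state
and assignment reached); the run starts in `(M.init, M.a0)`. -/
def confAt (M : DDSA B A X D) (steps : List (A × B × (X → D))) :
    ℕ → B × (X → D)
  | 0 => (M.init, M.a0)
  | k + 1 =>
    match steps[k]? with
    | some t => (t.2.1, t.2.2)
    | none => (M.init, M.a0)

/-- `steps` is a run of `M` from the initial configuration. -/
def DDSA.IsRun (M : DDSA B A X D) (steps : List (A × B × (X → D))) : Prop :=
  ∀ k t, steps[k]? = some t →
    M.step (confAt M steps k).1 (confAt M steps k).2 t.1 t.2.1 t.2.2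

/-- Finite-trace semantics `ρ, i ⊨ ψ` (Definition 5). -/
def Sat (M : DDSA B A X D) (steps : List (A × B × (X → D))) :
    LF B A X D → ℕ → Prop
  | .constr c, i => c.holds (confAt M steps i).2
  | .state b, i => (confAt M steps i).1 = b
  | .act a, i => 1 ≤ i ∧ ∃ t, steps[i - 1]? = some t ∧ t.1 = a
  | .and f g, i => Sat M steps f i ∧ Sat M steps g i
  | .or f g, i => Sat M steps f i ∨ Sat M steps g i
  | .diaA a f, i => (∃ t, steps[i]? = some t ∧ t.1 = a) ∧ Sat M steps f (i + 1)
  | .next f, i => i < steps.length ∧ Sat M steps f (i + 1)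
  | .ev f, i => ∃ j, i ≤ j ∧ j ≤ steps.length ∧ Sat M steps f j
  | .glob f, i => ∀ j, i ≤ j → j ≤ steps.length → Sat M steps f j
  | .untl f g, i => ∃ j, i ≤ j ∧ j ≤ steps.length ∧ Sat M steps g j ∧
      ∀ k, i ≤ k → k < j → Sat M steps f k

/-- The alphabet symbols `S = B ∪ A ∪ CC`. -/
abbrev Sym (B A X D : Type) := B ⊕ (A ⊕ Constr X D)

/-- Transition labels of the `δ` construction: a set of symbols together with
a set of `last`-markers (`true` = `λ`, `false` = `¬λ`). -/
abbrev Lab (B A X D : Type) := Set (Sym B A X D) × Set Bool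

/-- Quoted formulas (NFA states): `⊤`, `⊥`, or a quoted formula of `L`. -/
inductive QF (B A X D : Type) where
  | tru : QF B A X D
  | fls : QF B A X D
  | of : LF B A X D → QF B A X D

/-- Simplifying conjunction of quoted formulas. -/
def qand {B A X D : Type} : QF B A X D → QF B A X D → QF B A X D
  | .fls, _ => .fls
  | _, .fls => .fls
  | .tru, q => q
  | q, .tru => q
  | .of f, .of g => .of (.and f g)

/-- Simplifying disjunction of quoted formulas. -/
def qor {B A X D : Type} : QF B A X D → QF B A X D → QF B A X D
  | .tru, _ => .tru
  | _, .tru => .tru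
  | .fls, q => q
  | q, .fls => q
  | .of f, .of g => .of (.or f g)

def datom {B A X D : Type} (s : Sym B A X D) :
    Set (QF B A X D × Lab B A X D) :=
  {(QF.tru, ({s}, ∅)), (QF.fls, (∅, ∅))}

def dand {B A X D : Type} (R1 R2 : Set (QF B A X D × Lab B A X D)) :
    Set (QF B A X D × Lab B A X D) :=
  {p | ∃ q1 l1 q2 l2, (q1, l1) ∈ R1 ∧ (q2, l2) ∈ R2 ∧
    p = (qand q1 q2, (l1.1 ∪ l2.1, l1.2 ∪ l2.2))}

def dor {B A X D : Type} (R1 R2 : Set (QF B A X D × Lab B A X D)) :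
    Set (QF B A X D × Lab B A X D) :=
  {p | ∃ q1 l1 q2 l2, (q1, l1) ∈ R1 ∧ (q2, l2) ∈ R2 ∧
    p = (qor q1 q2, (l1.1 ∪ l2.1, l1.2 ∪ l2.2))}

def dnext {B A X D : Type} (q : QF B A X D) :
    Set (QF B A X D × Lab B A X D) :=
  {(q, (∅, {false})), (QF.fls, (∅, {true}))}

def dlast {B A X D : Type} : Set (QF B A X D × Lab B A X D) :=
  {(QF.tru, (∅, {true})), (QF.fls, (∅, {false}))}

/-- The function `δ` of the NFA construction. -/
def delta {B A X D : Type} : LF B A X D → Set (QF B A X D × Lab B A X D)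
  | .constr c => datom (Sum.inr (Sum.inr c))
  | .state b => datom (Sum.inl b)
  | .act a => datom (Sum.inr (Sum.inl a))
  | .and f g => dand (delta f) (delta g)
  | .or f g => dor (delta f) (delta g)
  | .diaA a f => dnext (QF.of (LF.and (LF.act a) f))
  | .next f => dnext (QF.of f)
  | .ev f => dor (delta f) (dnext (QF.of (LF.ev f)))
  | .glob f => dand (delta f) (dor (dnext (QF.of (LF.glob f))) dlast)
  | .untl f g => dor (delta g) (dand (delta f) (dnext (QF.of (LF.untl f g))))

def deltaQ {B A X D : Type} : QF B A X D → Set (QF B A X D × Lab B A X D)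
  | .tru => {(QF.tru, (∅, ∅))}
  | .fls => {(QF.fls, (∅, ∅))}
  | .of f => delta f

/-- Transition relation of the NFA `N_ψ` (Definition 10): `last`-markers are
stripped from the labels, transitions carrying both `λ` and `¬λ` are dropped,
and `λ`-labelled transitions into `⊤` are redirected to the extra accepting
sink `q_e` (`Sum.inr ()`). -/
def nfaTrans {B A X D : Type} (s : QF B A X D ⊕ Unit)
    (w : Set (Sym B A X D)) (s' : QF B A X D ⊕ Unit) : Prop :=
  ∃ (q q' : QF B A X D) (l : Lab B A X D),
    s = Sum.inl q ∧ (q', l) ∈ deltaQ q ∧ w = l.1 ∧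
    ¬(true ∈ l.2 ∧ false ∈ l.2) ∧
    ((true ∉ l.2 ∧ s' = Sum.inl q') ∨
     (true ∈ l.2 ∧ q' = QF.tru ∧ s' = Sum.inr ()))

inductive NfaSteps {B A X D : Type} :
    (QF B A X D ⊕ Unit) → List (Set (Sym B A X D)) → (QF B A X D ⊕ Unit) → Prop where
  | nil (s : QF B A X D ⊕ Unit) : NfaSteps s [] s
  | cons {s s' s'' : QF B A X D ⊕ Unit} {w : Set (Sym B A X D)}
      {ws : List (Set (Sym B A X D))} :
      nfaTrans s w s' → NfaSteps s' ws s'' → NfaSteps s (w :: ws) s''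

/-- The NFA `N_ψ` accepts the word `w` (final states: `⊤` and `q_e`). -/
def Accepts {B A X D : Type} (ψ : LF B A X D)
    (w : List (Set (Sym B A X D))) : Prop :=
  ∃ s', NfaSteps (Sum.inl (QF.of ψ)) w s' ∧
    (s' = Sum.inl QF.tru ∨ s' = Sum.inr ())

/-- Consistency of a word with a run: the word has one symbol per position of
the run, it mentions no state or action symbols contradicting the run, and
the assignment at each position satisfies the constraint symbols. -/
def ConsistentWord (M : DDSA B A X D) (steps : List (A × B × (X → D)))
    (w : List (Set (Sym B A X D))) : Prop :=
  w.length = steps.length + 1 ∧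
  ∀ i ς, w[i]? = some ς →
    (∀ b', Sum.inl b' ∈ ς → b' = (confAt M steps i).1) ∧
    (∀ a', Sum.inr (Sum.inl a') ∈ ς → 1 ≤ i →
      ∃ t, steps[i - 1]? = some t ∧ t.1 = a') ∧
    (∀ c, Sum.inr (Sum.inr c) ∈ ς → c.holds (confAt M steps i).2)

/-- A finite summary `(Φ, ∼)` for `(M, CC)` (Definition 8). -/
def IsFiniteSummary (M : DDSA B A X D) (CC : Set (Constr X D))
    (Φ : Set (B × ((X → D) → Prop)))
    (sim : ((X → D) → Prop) → ((X → D) → Prop) → Prop) : Prop :=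
  M.IsHistorySet CC Φ ∧
  Equivalence sim ∧
  (∀ P Q : (X → D) → Prop, eqv P Q → sim P Q) ∧
  Nonempty (DecidableRel sim) ∧
  (∀ b P Q, (b, P) ∈ Φ → (b, Q) ∈ Φ → sim P Q →
    ((∃ α, P α) ↔ (∃ α, Q α))) ∧
  (∀ b P Q a b' C, (b, P) ∈ Φ → (b, Q) ∈ Φ → sim P Q →
    M.trans b a = some b' → C ⊆ CC →
    sim (fun α => M.updateSem P a α ∧ csHolds α C)
        (fun α => M.updateSem Q a α ∧ csHolds α C)) ∧
  (∃ S : Set ((X → D) → Prop), S.Finite ∧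
    ∀ b P, (b, P) ∈ Φ → ∃ Q ∈ S, sim P Q)

/-- `M` extended with a dummy initial state `b₀'` (`none`) and a fresh action
`a₀` (`none`) with guard `⊤` leading to the original initial state. -/
def extD (M : DDSA B A X D) : DDSA (Option B) (Option A) X D where
  init := none
  trans := fun b? a? =>
    match b?, a? with
    | none, none => some (some M.init)
    | some b, some a => (M.trans b a).map some
    | _, _ => none
  final := {b? | ∃ bf ∈ M.final, b? = some bf}
  a0 := M.a0
  guard := fun a? => match a? with | none => Constr.tru | some a => M.guard a

/-- A transition of the product automaton `N_B^ψ` (Definition 12): the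
(extended) DDSA takes a transition, the NFA takes a transition whose label is
consistent with it, the formula `χ = update(φ, a) ∧ ⋀ constr(ς)` is
satisfiable, and the new formula component is a `∼`-representative of `χ`
belonging to the history set `Φ`. -/
def prodStep (M : DDSA B A X D) (Φ : Set (B × ((X → D) → Prop)))
    (sim : ((X → D) → Prop) → ((X → D) → Prop) → Prop)
    (p p' : Option B × (QF B A X D ⊕ Unit) × ((X → D) → Prop)) : Prop :=
  ∃ (a : Option A) (b'' : B) (ς : Set (Sym B A X D)),
    (extD M).trans p.1 a = some (some b'') ∧ p'.1 = some b'' ∧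
    nfaTrans p.2.1 ς p'.2.1 ∧
    (∀ b0, Sum.inl b0 ∈ ς → b0 = b'') ∧
    (∀ a0, Sum.inr (Sum.inl a0) ∈ ς → a = some a0) ∧
    (∃ α, (extD M).updateSem p.2.2 a α ∧
      ∀ c, Sum.inr (Sum.inr c) ∈ ς → c.holds α) ∧
    sim p'.2.2 (fun α => (extD M).updateSem p.2.2 a α ∧
      ∀ c, Sum.inr (Sum.inr c) ∈ ς → c.holds α) ∧
    (b'', p'.2.2) ∈ Φ

section Aux
variable {B A X D : Type} [Add D] [Sub D] [LT D] [LE D]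

/-- Truth of an alphabet symbol at position `i` of a run. -/
def SymTrue (M : DDSA B A X D) (steps : List (A × B × (X → D))) (i : ℕ) :
    Sym B A X D → Prop
  | Sum.inl b' => b' = (confAt M steps i).1
  | Sum.inr (Sum.inl a') => 1 ≤ i ∧ ∃ t, steps[i-1]? = some t ∧ t.1 = a'
  | Sum.inr (Sum.inr c) => c.holds (confAt M steps i).2

def SatQ (M : DDSA B A X D) (steps : List (A × B × (X → D)))
    (q : QF B A X D) (i : ℕ) : Prop :=
  match q with
  | .tru => True
  | .fls => False
  | .of f => Sat M steps f i

def ContOK (M : DDSA B A X D) (steps : List (A × B × (X → D)))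
    (q : QF B A X D) (i : ℕ) : Prop :=
  match q with
  | .tru => True
  | .fls => False
  | .of g => i < steps.length ∧ Sat M steps g (i+1)

lemma contOK_qand {M : DDSA B A X D} {steps} {q1 q2 : QF B A X D} {i : ℕ}
    (h : ContOK M steps (qand q1 q2) i) :
    ContOK M steps q1 i ∧ ContOK M steps q2 i := by
  cases q1 <;> cases q2 <;> simp_all [ContOK, qand, Sat]

lemma contOK_qor {M : DDSA B A X D} {steps} {q1 q2 : QF B A X D} {i : ℕ}
    (h : ContOK M steps (qor q1 q2) i) :
    ContOK M steps q1 i ∨ ContOK M steps q2 i := by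
  cases q1 <;> cases q2 <;> simp_all [ContOK, qor, Sat] <;> tauto

lemma mem_dand {R1 R2 : Set (QF B A X D × Lab B A X D)} {q : QF B A X D}
    {S : Set (Sym B A X D)} {Mk : Set Bool}
    (h : (q, (S, Mk)) ∈ dand R1 R2) :
    ∃ q1 S1 M1 q2 S2 M2, (q1, (S1, M1)) ∈ R1 ∧ (q2, (S2, M2)) ∈ R2 ∧
      q = qand q1 q2 ∧ S = S1 ∪ S2 ∧ Mk = M1 ∪ M2 := by
  obtain ⟨q1, l1, q2, l2, h1, h2, heq⟩ := h
  obtain ⟨hq, hl⟩ : q = qand q1 q2 ∧ (S, Mk) = (l1.1 ∪ l2.1, l1.2 ∪ l2.2) :=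
    Prod.mk.injEq .. ▸ heq
  obtain ⟨hS, hM⟩ : S = l1.1 ∪ l2.1 ∧ Mk = l1.2 ∪ l2.2 :=
    Prod.mk.injEq .. ▸ hl
  exact ⟨q1, l1.1, l1.2, q2, l2.1, l2.2, h1, h2, hq, hS, hM⟩

lemma mem_dor {R1 R2 : Set (QF B A X D × Lab B A X D)} {q : QF B A X D}
    {S : Set (Sym B A X D)} {Mk : Set Bool}
    (h : (q, (S, Mk)) ∈ dor R1 R2) :
    ∃ q1 S1 M1 q2 S2 M2, (q1, (S1, M1)) ∈ R1 ∧ (q2, (S2, M2)) ∈ R2 ∧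
      q = qor q1 q2 ∧ S = S1 ∪ S2 ∧ Mk = M1 ∪ M2 := by
  obtain ⟨q1, l1, q2, l2, h1, h2, heq⟩ := h
  obtain ⟨hq, hl⟩ : q = qor q1 q2 ∧ (S, Mk) = (l1.1 ∪ l2.1, l1.2 ∪ l2.2) :=
    Prod.mk.injEq .. ▸ heq
  obtain ⟨hS, hM⟩ : S = l1.1 ∪ l2.1 ∧ Mk = l1.2 ∪ l2.2 :=
    Prod.mk.injEq .. ▸ hl
  exact ⟨q1, l1.1, l1.2, q2, l2.1, l2.2, h1, h2, hq, hS, hM⟩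

lemma dand_intro {R1 R2 : Set (QF B A X D × Lab B A X D)} {q1 q2 : QF B A X D}
    {S1 S2 : Set (Sym B A X D)} {M1 M2 : Set Bool}
    (h1 : (q1, (S1, M1)) ∈ R1) (h2 : (q2, (S2, M2)) ∈ R2) :
    (qand q1 q2, (S1 ∪ S2, M1 ∪ M2)) ∈ dand R1 R2 :=
  ⟨q1, (S1, M1), q2, (S2, M2), h1, h2, rfl⟩

lemma dor_intro {R1 R2 : Set (QF B A X D × Lab B A X D)} {q1 q2 : QF B A X D}
    {S1 S2 : Set (Sym B A X D)} {M1 M2 : Set Bool}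
    (h1 : (q1, (S1, M1)) ∈ R1) (h2 : (q2, (S2, M2)) ∈ R2) :
    (qor q1 q2, (S1 ∪ S2, M1 ∪ M2)) ∈ dor R1 R2 :=
  ⟨q1, (S1, M1), q2, (S2, M2), h1, h2, rfl⟩

lemma mem_datom {s : Sym B A X D} {q : QF B A X D} {S : Set (Sym B A X D)}
    {Mk : Set Bool} (h : (q, (S, Mk)) ∈ datom s) :
    (q = QF.tru ∧ S = {s} ∧ Mk = ∅) ∨ (q = QF.fls ∧ S = ∅ ∧ Mk = ∅) := by
  rcases h with h | h <;> [left; right] <;>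
    exact ⟨congrArg Prod.fst h, congrArg (fun p => p.2.1) h,
      congrArg (fun p => p.2.2) h⟩

lemma mem_dnext {q0 q : QF B A X D} {S : Set (Sym B A X D)} {Mk : Set Bool}
    (h : (q, (S, Mk)) ∈ dnext q0) :
    (q = q0 ∧ S = ∅ ∧ Mk = {false}) ∨ (q = QF.fls ∧ S = ∅ ∧ Mk = {true}) := by
  rcases h with h | h <;> [left; right] <;>
    exact ⟨congrArg Prod.fst h, congrArg (fun p => p.2.1) h,
      congrArg (fun p => p.2.2) h⟩

lemma mem_dlast {q : QF B A X D} {S : Set (Sym B A X D)} {Mk : Set Bool}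
    (h : (q, (S, Mk)) ∈ (dlast : Set (QF B A X D × Lab B A X D))) :
    (q = QF.tru ∧ S = ∅ ∧ Mk = {true}) ∨ (q = QF.fls ∧ S = ∅ ∧ Mk = {false}) := by
  rcases h with h | h <;> [left; right] <;>
    exact ⟨congrArg Prod.fst h, congrArg (fun p => p.2.1) h,
      congrArg (fun p => p.2.2) h⟩

lemma deltaSound (M : DDSA B A X D) (steps : List (A × B × (X → D)))
    (f : LF B A X D) (i : ℕ) (hi : i ≤ steps.length) :
    ∀ q' S Mk, (q', (S, Mk)) ∈ delta f →
    (∀ s ∈ S, SymTrue M steps i s) →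
    (true ∈ Mk → i = steps.length) →
    ContOK M steps q' i → Sat M steps f i := by
  induction f with
  | constr c =>
    intro q' S Mk hmem hS hMk hC
    rcases mem_datom hmem with ⟨h1, h2, _⟩ | ⟨h1, _, _⟩
    · subst h1 h2
      simpa [Sat, SymTrue] using hS _ rfl
    · subst h1; simp [ContOK] at hC
  | state b =>
    intro q' S Mk hmem hS hMk hC
    rcases mem_datom hmem with ⟨h1, h2, _⟩ | ⟨h1, _, _⟩
    · subst h1 h2
      have := hS _ rfl
      simpa [Sat, SymTrue] using this.symm
    · subst h1; simp [ContOK] at hC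
  | act a =>
    intro q' S Mk hmem hS hMk hC
    rcases mem_datom hmem with ⟨h1, h2, _⟩ | ⟨h1, _, _⟩
    · subst h1 h2
      simpa [Sat, SymTrue] using hS _ rfl
    · subst h1; simp [ContOK] at hC
  | and f g ihf ihg =>
    intro q' S Mk hmem hS hMk hC
    obtain ⟨q1, S1, M1, q2, S2, M2, h1, h2, hq, hSe, hMe⟩ := mem_dand hmem
    subst hq hSe hMe
    obtain ⟨hC1, hC2⟩ := contOK_qand hC
    exact ⟨ihf _ _ _ h1 (fun s hs => hS s (Or.inl hs))
        (fun ht => hMk (Or.inl ht)) hC1,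
      ihg _ _ _ h2 (fun s hs => hS s (Or.inr hs))
        (fun ht => hMk (Or.inr ht)) hC2⟩
  | or f g ihf ihg =>
    intro q' S Mk hmem hS hMk hC
    obtain ⟨q1, S1, M1, q2, S2, M2, h1, h2, hq, hSe, hMe⟩ := mem_dor hmem
    subst hq hSe hMe
    rcases contOK_qor hC with hC1 | hC2
    · exact Or.inl (ihf _ _ _ h1 (fun s hs => hS s (Or.inl hs))
        (fun ht => hMk (Or.inl ht)) hC1)
    · exact Or.inr (ihg _ _ _ h2 (fun s hs => hS s (Or.inr hs))
        (fun ht => hMk (Or.inr ht)) hC2)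
  | diaA a f ihf =>
    intro q' S Mk hmem hS hMk hC
    rcases mem_dnext hmem with ⟨h1, _, _⟩ | ⟨h1, _, _⟩
    · subst h1
      obtain ⟨hlt, hsat⟩ : i < steps.length ∧
          Sat M steps (LF.and (LF.act a) f) (i+1) := hC
      obtain ⟨hact, hf⟩ := hsat
      obtain ⟨-, t, ht, hta⟩ : 1 ≤ i + 1 ∧
          ∃ t, steps[i+1-1]? = some t ∧ t.1 = a := hact
      exact ⟨⟨t, by simpa using ht, hta⟩, hf⟩
    · subst h1; simp [ContOK] at hC
  | next f ihf =>
    intro q' S Mk hmem hS hMk hC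
    rcases mem_dnext hmem with ⟨h1, _, _⟩ | ⟨h1, _, _⟩
    · subst h1
      exact hC
    · subst h1; simp [ContOK] at hC
  | ev f ihf =>
    intro q' S Mk hmem hS hMk hC
    obtain ⟨q1, S1, M1, q2, S2, M2, h1, h2, hq, hSe, hMe⟩ := mem_dor hmem
    subst hq hSe hMe
    rcases contOK_qor hC with hC1 | hC2
    · exact ⟨i, le_refl i, hi, ihf _ _ _ h1 (fun s hs => hS s (Or.inl hs))
        (fun ht => hMk (Or.inl ht)) hC1⟩
    · rcases mem_dnext h2 with ⟨h1', _, _⟩ | ⟨h1', _, _⟩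
      · subst h1'
        obtain ⟨hlt, j, hj1, hj2, hj3⟩ : i < steps.length ∧
          ∃ j, i + 1 ≤ j ∧ j ≤ steps.length ∧ Sat M steps f j := hC2
        exact ⟨j, le_trans (Nat.le_succ i) hj1, hj2, hj3⟩
      · subst h1'; simp [ContOK] at hC2
  | glob f ihf =>
    intro q' S Mk hmem hS hMk hC
    obtain ⟨q1, S1, M1, q2, S2, M2, h1, h2, hq, hSe, hMe⟩ := mem_dand hmem
    subst hq hSe hMe
    obtain ⟨hC1, hC2⟩ := contOK_qand hC
    have hf : Sat M steps f i := ihf _ _ _ h1 (fun s hs => hS s (Or.inl hs))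
      (fun ht => hMk (Or.inl ht)) hC1
    obtain ⟨q3, S3, M3, q4, S4, M4, h3, h4, hq2, hSe2, hMe2⟩ := mem_dor h2
    subst hq2 hSe2 hMe2
    rcases contOK_qor hC2 with hC3 | hC4
    · rcases mem_dnext h3 with ⟨h1', _, _⟩ | ⟨h1', _, _⟩
      · subst h1'
        obtain ⟨hlt, hg⟩ : i < steps.length ∧ Sat M steps (LF.glob f) (i+1) := hC3
        intro j hij hjn
        rcases Nat.eq_or_lt_of_le hij with rfl | hlt'
        · exact hf
        · exact hg j hlt' hjn
      · subst h1'; simp [ContOK] at hC3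
    · rcases mem_dlast h4 with ⟨h1', _, hM4⟩ | ⟨h1', _, _⟩
      · subst h1' hM4
        have hin : i = steps.length :=
          hMk (Or.inr (Or.inr rfl))
        intro j hij hjn
        have : j = i := le_antisymm (hin ▸ hjn) hij
        exact this ▸ hf
      · subst h1'; simp [ContOK] at hC4
  | untl f g ihf ihg =>
    intro q' S Mk hmem hS hMk hC
    obtain ⟨q1, S1, M1, q2, S2, M2, h1, h2, hq, hSe, hMe⟩ := mem_dor hmem
    subst hq hSe hMe
    rcases contOK_qor hC with hC1 | hC2
    · exact ⟨i, le_refl i, hi, ihg _ _ _ h1 (fun s hs => hS s (Or.inl hs))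
        (fun ht => hMk (Or.inl ht)) hC1, fun k hk1 hk2 => absurd hk1 (by omega)⟩
    · obtain ⟨q3, S3, M3, q4, S4, M4, h3, h4, hq2, hSe2, hMe2⟩ := mem_dand h2
      subst hq2 hSe2 hMe2
      obtain ⟨hC3, hC4⟩ := contOK_qand hC2
      have hf : Sat M steps f i := ihf _ _ _ h3
        (fun s hs => hS s (Or.inr (Or.inl hs)))
        (fun ht => hMk (Or.inr (Or.inl ht))) hC3
      rcases mem_dnext h4 with ⟨h1', _, _⟩ | ⟨h1', _, _⟩
      · subst h1'
        obtain ⟨hlt, j, hj1, hj2, hj3, hj4⟩ : i < steps.length ∧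
            ∃ j, i + 1 ≤ j ∧ j ≤ steps.length ∧ Sat M steps g j ∧
              ∀ k, i + 1 ≤ k → k < j → Sat M steps f k := hC4
        refine ⟨j, by omega, hj2, hj3, fun k hk1 hk2 => ?_⟩
        rcases Nat.eq_or_lt_of_le hk1 with rfl | hlt'
        · exact hf
        · exact hj4 k hlt' hk2
      · subst h1'; simp [ContOK] at hC4

end Aux
section Aux2
variable {B A X D : Type} [Add D] [Sub D] [LT D] [LE D]

omit [Add D] [Sub D] [LT D] [LE D] in
lemma nfaSteps_cases {s s' : QF B A X D ⊕ Unit} {ws : List (Set (Sym B A X D))}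
    (h : NfaSteps s ws s') :
    (ws = [] ∧ s' = s) ∨
    ∃ ς ws1 s1, ws = ς :: ws1 ∧ nfaTrans s ς s1 ∧ NfaSteps s1 ws1 s' := by
  cases h with
  | nil => exact Or.inl ⟨rfl, rfl⟩
  | cons htr hrest => exact Or.inr ⟨_, _, _, rfl, htr, hrest⟩

omit [Add D] [Sub D] [LT D] [LE D] in
lemma nfaSteps_fls : ∀ {ws : List (Set (Sym B A X D))} {s' : QF B A X D ⊕ Unit},
    NfaSteps (Sum.inl QF.fls) ws s' → s' = Sum.inl QF.fls := by
  intro ws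
  induction ws with
  | nil =>
    intro s' h
    rcases nfaSteps_cases h with ⟨-, rfl⟩ | ⟨ς, ws1, s1, heq, -, -⟩
    · rfl
    · cases heq
  | cons ς0 ws0 ih =>
    intro s' h
    rcases nfaSteps_cases h with ⟨heq, -⟩ | ⟨ς, ws1, s1, heq, htr, hrest⟩
    · cases heq
    · obtain ⟨rfl, rfl⟩ : ς0 = ς ∧ ws0 = ws1 := by
        injection heq with h1 h2; exact ⟨h1, h2⟩
      obtain ⟨q, q', l, hq, hmem, hw, hcons, hbr⟩ := htr
      obtain rfl : QF.fls = q := by simpa using hq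
      obtain ⟨hq', hl⟩ : q' = QF.fls ∧ l = (∅, ∅) := by
        have : (q', l) = (QF.fls, (∅, ∅)) := hmem
        exact ⟨congrArg Prod.fst this, congrArg Prod.snd this⟩
      subst hq' hl
      rcases hbr with ⟨-, rfl⟩ | ⟨h1, -, -⟩
      · exact ih hrest
      · exact absurd h1 (by simp)

omit [Add D] [Sub D] [LT D] [LE D] in
lemma nfaSteps_inr {ws : List (Set (Sym B A X D))} {s' : QF B A X D ⊕ Unit}
    (h : NfaSteps (Sum.inr ()) ws s') : ws = [] ∧ s' = Sum.inr () := by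
  rcases nfaSteps_cases h with ⟨rfl, rfl⟩ | ⟨ς, ws1, s1, heq, htr, -⟩
  · exact ⟨rfl, rfl⟩
  · obtain ⟨q, q', l, hq, -⟩ := htr
    exact absurd hq (by simp)

lemma nfaSound (M : DDSA B A X D) (steps : List (A × B × (X → D))) :
    ∀ (ws : List (Set (Sym B A X D))) (q : QF B A X D) (i : ℕ)
      (s' : QF B A X D ⊕ Unit),
      i + ws.length = steps.length + 1 →
      (∀ j ς, ws[j]? = some ς → ∀ s ∈ ς, SymTrue M steps (i + j) s) →
      NfaSteps (Sum.inl q) ws s' →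
      (s' = Sum.inl QF.tru ∨ s' = Sum.inr ()) →
      SatQ M steps q i := by
  intro ws
  induction ws with
  | nil =>
    intro q i s' hlen hgood h hacc
    rcases nfaSteps_cases h with ⟨-, rfl⟩ | ⟨ς, ws1, s1, heq, -, -⟩
    · rcases hacc with h | h
      · obtain rfl : q = QF.tru := by simpa using h
        trivial
      · exact absurd h (by simp)
    · cases heq
  | cons ς ws' ih =>
    intro q i s' hlen hgood h hacc
    rcases nfaSteps_cases h with ⟨heq, -⟩ | ⟨ς1, ws1, s1, heq, htr, hrest⟩
    · cases heq
    · obtain ⟨rfl, rfl⟩ : ς = ς1 ∧ ws' = ws1 := by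
        injection heq with h1 h2; exact ⟨h1, h2⟩
      obtain ⟨q0, q', l, hq, hmem, hw, hcons, hbr⟩ := htr
      obtain rfl : q = q0 := by simpa using hq
      cases q with
      | tru => trivial
      | fls =>
        obtain ⟨hq', hl⟩ : q' = QF.fls ∧ l = (∅, ∅) := by
          have : (q', l) = (QF.fls, (∅, ∅)) := hmem
          exact ⟨congrArg Prod.fst this, congrArg Prod.snd this⟩
        subst hq' hl
        rcases hbr with ⟨-, rfl⟩ | ⟨h1, -, -⟩
        · have := nfaSteps_fls hrest
          subst this
          rcases hacc with h | h <;> simp at h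
        · exact absurd h1 (by simp)
      | of f =>
        have hmem' : (q', l) ∈ delta f := hmem
        have hiS : ∀ s ∈ ς, SymTrue M steps i s := by
          have := hgood 0 ς (by simp)
          simpa using this
        subst hw
        rcases hbr with ⟨hnt, rfl⟩ | ⟨ht, rfl, rfl⟩
        · -- normal transition
          have hgood' : ∀ j ς', ws'[j]? = some ς' →
              ∀ s ∈ ς', SymTrue M steps (i + 1 + j) s := by
            intro j ς' hj s hs
            have := hgood (j+1) ς' (by simpa using hj) s hs
            simpa [Nat.add_assoc, Nat.add_comm 1 j] using this
          have hsq : SatQ M steps q' (i + 1) :=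
            ih q' (i+1) s' (by simp at hlen ⊢; omega) hgood' hrest hacc
          refine deltaSound M steps f i (by simp at hlen; omega) q' l.1 l.2
            hmem' hiS (fun hTrue => (hnt hTrue).elim) ?_
          cases q' with
          | tru => trivial
          | fls => exact absurd hsq (by simp [SatQ])
          | of g =>
            refine ⟨?_, hsq⟩
            rcases ws' with _ | ⟨ς2, ws2⟩
            · rcases nfaSteps_cases hrest with ⟨-, rfl⟩ | ⟨_, _, _, heq2, -, -⟩
              · rcases hacc with h | h <;> simp at h
              · cases heq2
            · simp at hlen; omega
        · -- λ-exit
          obtain ⟨hnil, -⟩ := nfaSteps_inr hrest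
          subst hnil
          have hin : i = steps.length := by simpa using hlen
          exact deltaSound M steps f i (le_of_eq hin) QF.tru l.1 l.2
            hmem' hiS (fun _ => hin) trivial

end Aux2
section Aux3
variable {B A X D : Type} [Add D] [Sub D] [LT D] [LE D]

def ContC (M : DDSA B A X D) (steps : List (A × B × (X → D)))
    (q : QF B A X D) (j : ℕ) : Prop :=
  match q with
  | .tru => True
  | .fls => False
  | .of g => Sat M steps g j

lemma contC_qor_left {M : DDSA B A X D} {steps} {q1 : QF B A X D} {j : ℕ}
    (h : ContC M steps q1 j) (q2 : QF B A X D) :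
    ContC M steps (qor q1 q2) j := by
  cases q1 <;> cases q2 <;> simp_all [ContC, qor, Sat] <;> tauto

lemma contC_qor_right {M : DDSA B A X D} {steps} {q2 : QF B A X D} {j : ℕ}
    (h : ContC M steps q2 j) (q1 : QF B A X D) :
    ContC M steps (qor q1 q2) j := by
  cases q1 <;> cases q2 <;> simp_all [ContC, qor, Sat] <;> tauto

lemma contC_qand {M : DDSA B A X D} {steps} {q1 q2 : QF B A X D} {j : ℕ}
    (h1 : ContC M steps q1 j) (h2 : ContC M steps q2 j) :
    ContC M steps (qand q1 q2) j := by
  cases q1 <;> cases q2 <;> simp_all [ContC, qand, Sat]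

/-- padding move with no symbols and no `λ` marker -/
lemma padLt (f : LF B A X D) :
    ∃ q Mk, (q, ((∅ : Set (Sym B A X D)), Mk)) ∈ delta f ∧ true ∉ Mk := by
  induction f with
  | constr c => exact ⟨QF.fls, ∅, Or.inr rfl, by simp⟩
  | state b => exact ⟨QF.fls, ∅, Or.inr rfl, by simp⟩
  | act a => exact ⟨QF.fls, ∅, Or.inr rfl, by simp⟩
  | and f g ihf ihg =>
    obtain ⟨q1, M1, h1, hM1⟩ := ihf
    obtain ⟨q2, M2, h2, hM2⟩ := ihg
    exact ⟨_, _, by simpa [delta] using dand_intro h1 h2, by simp [hM1, hM2]⟩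
  | or f g ihf ihg =>
    obtain ⟨q1, M1, h1, hM1⟩ := ihf
    obtain ⟨q2, M2, h2, hM2⟩ := ihg
    exact ⟨_, _, by simpa [delta] using dor_intro h1 h2, by simp [hM1, hM2]⟩
  | diaA a f ihf => exact ⟨_, {false}, Or.inl rfl, by simp⟩
  | next f ihf => exact ⟨_, {false}, Or.inl rfl, by simp⟩
  | ev f ihf =>
    obtain ⟨q1, M1, h1, hM1⟩ := ihf
    have h2 : (QF.of (LF.ev f), ((∅ : Set (Sym B A X D)), ({false} : Set Bool))) ∈
        dnext (QF.of (LF.ev f)) := Or.inl rfl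
    exact ⟨_, _, by simpa [delta] using dor_intro h1 h2, by simp [hM1]⟩
  | glob f ihf =>
    obtain ⟨q1, M1, h1, hM1⟩ := ihf
    have h2 : (qor (QF.of (LF.glob f)) QF.fls,
        ((∅ : Set (Sym B A X D)) ∪ ∅, ({false} : Set Bool) ∪ {false})) ∈
        dor (dnext (QF.of (LF.glob f))) dlast :=
      dor_intro (Or.inl rfl) (Or.inr rfl)
    exact ⟨_, _, by simpa [delta] using dand_intro h1 h2, by simp [hM1]⟩
  | untl f g ihf ihg =>
    obtain ⟨q1, M1, h1, hM1⟩ := ihg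
    obtain ⟨q2, M2, h2, hM2⟩ := ihf
    have h3 : (qand q2 (QF.of (LF.untl f g)),
        ((∅ : Set (Sym B A X D)) ∪ ∅, M2 ∪ {false})) ∈
        dand (delta f) (dnext (QF.of (LF.untl f g))) :=
      dand_intro h2 (Or.inl rfl)
    exact ⟨_, _, by simpa [delta] using dor_intro h1 h3, by simp [hM1, hM2]⟩

/-- padding move with no symbols and no `¬λ` marker -/
lemma padN (f : LF B A X D) :
    ∃ q Mk, (q, ((∅ : Set (Sym B A X D)), Mk)) ∈ delta f ∧ false ∉ Mk := by
  induction f with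
  | constr c => exact ⟨QF.fls, ∅, Or.inr rfl, by simp⟩
  | state b => exact ⟨QF.fls, ∅, Or.inr rfl, by simp⟩
  | act a => exact ⟨QF.fls, ∅, Or.inr rfl, by simp⟩
  | and f g ihf ihg =>
    obtain ⟨q1, M1, h1, hM1⟩ := ihf
    obtain ⟨q2, M2, h2, hM2⟩ := ihg
    exact ⟨_, _, by simpa [delta] using dand_intro h1 h2, by simp [hM1, hM2]⟩
  | or f g ihf ihg =>
    obtain ⟨q1, M1, h1, hM1⟩ := ihf
    obtain ⟨q2, M2, h2, hM2⟩ := ihg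
    exact ⟨_, _, by simpa [delta] using dor_intro h1 h2, by simp [hM1, hM2]⟩
  | diaA a f ihf => exact ⟨_, {true}, Or.inr rfl, by simp⟩
  | next f ihf => exact ⟨_, {true}, Or.inr rfl, by simp⟩
  | ev f ihf =>
    obtain ⟨q1, M1, h1, hM1⟩ := ihf
    have h2 : ((QF.fls : QF B A X D), ((∅ : Set (Sym B A X D)), ({true} : Set Bool))) ∈
        dnext (QF.of (LF.ev f)) := Or.inr rfl
    exact ⟨_, _, by simpa [delta] using dor_intro h1 h2, by simp [hM1]⟩
  | glob f ihf =>
    obtain ⟨q1, M1, h1, hM1⟩ := ihf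
    have h2 : (qor QF.fls QF.tru,
        ((∅ : Set (Sym B A X D)) ∪ ∅, ({true} : Set Bool) ∪ {true})) ∈
        dor (dnext (QF.of (LF.glob f))) dlast :=
      dor_intro (Or.inr rfl) (Or.inl rfl)
    exact ⟨_, _, by simpa [delta] using dand_intro h1 h2, by simp [hM1]⟩
  | untl f g ihf ihg =>
    obtain ⟨q1, M1, h1, hM1⟩ := ihg
    obtain ⟨q2, M2, h2, hM2⟩ := ihf
    have h3 : (qand q2 QF.fls,
        ((∅ : Set (Sym B A X D)) ∪ ∅, M2 ∪ {true})) ∈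
        dand (delta f) (dnext (QF.of (LF.untl f g))) :=
      dand_intro h2 (Or.inr rfl)
    exact ⟨_, _, by simpa [delta] using dor_intro h1 h3, by simp [hM1, hM2]⟩

end Aux3
section Aux4
variable {B A X D : Type} [Add D] [Sub D] [LT D] [LE D]

lemma deltaComplete_last (M : DDSA B A X D) (steps : List (A × B × (X → D))) :
    ∀ f : LF B A X D, Sat M steps f steps.length →
    ∃ S Mk, (QF.tru, (S, Mk)) ∈ delta f ∧
      (∀ s ∈ S, SymTrue M steps steps.length s) ∧ false ∉ Mk := by
  intro f
  induction f with
  | constr c =>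
    intro h
    refine ⟨{Sum.inr (Sum.inr c)}, ∅, Or.inl rfl, ?_, by simp⟩
    intro s hs
    obtain rfl : s = Sum.inr (Sum.inr c) := hs
    exact h
  | state b =>
    intro h
    refine ⟨{Sum.inl b}, ∅, Or.inl rfl, ?_, by simp⟩
    intro s hs
    obtain rfl : s = Sum.inl b := hs
    exact h.symm
  | act a =>
    intro h
    refine ⟨{Sum.inr (Sum.inl a)}, ∅, Or.inl rfl, ?_, by simp⟩
    intro s hs
    obtain rfl : s = Sum.inr (Sum.inl a) := hs
    exact h
  | and f g ihf ihg =>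
    intro h
    obtain ⟨S1, M1, h1, hS1, hM1⟩ := ihf h.1
    obtain ⟨S2, M2, h2, hS2, hM2⟩ := ihg h.2
    refine ⟨S1 ∪ S2, M1 ∪ M2, by simpa [delta, qand] using dand_intro h1 h2, ?_, by simp [hM1, hM2]⟩
    intro s hs
    rcases hs with hs | hs
    · exact hS1 s hs
    · exact hS2 s hs
  | or f g ihf ihg =>
    intro h
    rcases h with h | h
    · obtain ⟨S1, M1, h1, hS1, hM1⟩ := ihf h
      obtain ⟨q2, M2, h2, hM2⟩ := padN g
      have := dor_intro h1 h2
      refine ⟨S1 ∪ ∅, M1 ∪ M2, ?_, ?_, by simp [hM1, hM2]⟩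
      · simpa [qor, delta] using this
      · intro s hs
        rcases hs with hs | hs
        · exact hS1 s hs
        · exact absurd hs (by simp)
    · obtain ⟨S2, M2, h2, hS2, hM2⟩ := ihg h
      obtain ⟨q1, M1, h1, hM1⟩ := padN f
      have := dor_intro h1 h2
      have hq : qor q1 QF.tru = QF.tru := by cases q1 <;> rfl
      refine ⟨∅ ∪ S2, M1 ∪ M2, ?_, ?_, by simp [hM1, hM2]⟩
      · simpa [hq, delta] using this
      · intro s hs
        rcases hs with hs | hs
        · exact absurd hs (by simp)
        · exact hS2 s hs
  | diaA a f ihf =>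
    intro h
    obtain ⟨⟨t, ht, -⟩, -⟩ := h
    rw [List.getElem?_eq_none (le_refl steps.length)] at ht
    cases ht
  | next f ihf =>
    intro h
    exact absurd h.1 (lt_irrefl _)
  | ev f ihf =>
    intro h
    obtain ⟨j, hj1, hj2, hj3⟩ := h
    obtain rfl : j = steps.length := le_antisymm hj2 hj1
    obtain ⟨S1, M1, h1, hS1, hM1⟩ := ihf hj3
    have h2 : ((QF.fls : QF B A X D), ((∅ : Set (Sym B A X D)), ({true} : Set Bool))) ∈
        dnext (QF.of (LF.ev f)) := Or.inr rfl
    have := dor_intro h1 h2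
    refine ⟨S1 ∪ ∅, M1 ∪ {true}, by simpa [qor, delta] using this, ?_, by simp [hM1]⟩
    intro s hs
    rcases hs with hs | hs
    · exact hS1 s hs
    · exact absurd hs (by simp)
  | glob f ihf =>
    intro h
    have hf : Sat M steps f steps.length := h steps.length (le_refl _) (le_refl _)
    obtain ⟨S1, M1, h1, hS1, hM1⟩ := ihf hf
    have h2 : ((QF.fls : QF B A X D), ((∅ : Set (Sym B A X D)), ({true} : Set Bool))) ∈
        dnext (QF.of (LF.glob f)) := Or.inr rfl
    have h3 : ((QF.tru : QF B A X D), ((∅ : Set (Sym B A X D)), ({true} : Set Bool))) ∈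
        (dlast : Set (QF B A X D × Lab B A X D)) := Or.inl rfl
    have h4 := dor_intro h2 h3
    have h5 := dand_intro h1 h4
    refine ⟨S1 ∪ (∅ ∪ ∅), M1 ∪ ({true} ∪ {true}), by simpa [qor, qand, delta] using h5, ?_,
      by simp [hM1]⟩
    intro s hs
    rcases hs with hs | hs
    · exact hS1 s hs
    · exact absurd hs (by simp)
  | untl f g ihf ihg =>
    intro h
    obtain ⟨j, hj1, hj2, hj3, -⟩ := h
    obtain rfl : j = steps.length := le_antisymm hj2 hj1
    obtain ⟨S1, M1, h1, hS1, hM1⟩ := ihg hj3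
    obtain ⟨q2, M2, h2, hM2⟩ := padN f
    have h3 : ((QF.fls : QF B A X D), ((∅ : Set (Sym B A X D)), ({true} : Set Bool))) ∈
        dnext (QF.of (LF.untl f g)) := Or.inr rfl
    have h4 := dand_intro h2 h3
    have hq : qand q2 QF.fls = QF.fls := by cases q2 <;> rfl
    rw [hq] at h4
    have h5 := dor_intro h1 h4
    refine ⟨S1 ∪ (∅ ∪ ∅), M1 ∪ (M2 ∪ {true}), by simpa [qor, delta] using h5, ?_,
      by simp [hM1, hM2]⟩
    intro s hs
    rcases hs with hs | hs
    · exact hS1 s hs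
    · exact absurd hs (by simp)

lemma deltaComplete_lt (M : DDSA B A X D) (steps : List (A × B × (X → D))) :
    ∀ (f : LF B A X D) (i : ℕ), i < steps.length → Sat M steps f i →
    ∃ q' S Mk, (q', (S, Mk)) ∈ delta f ∧
      (∀ s ∈ S, SymTrue M steps i s) ∧ true ∉ Mk ∧ ContC M steps q' (i+1) := by
  intro f
  induction f with
  | constr c =>
    intro i hi h
    refine ⟨QF.tru, {Sum.inr (Sum.inr c)}, ∅, Or.inl rfl, ?_, by simp, trivial⟩
    intro s hs
    obtain rfl : s = Sum.inr (Sum.inr c) := hs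
    exact h
  | state b =>
    intro i hi h
    refine ⟨QF.tru, {Sum.inl b}, ∅, Or.inl rfl, ?_, by simp, trivial⟩
    intro s hs
    obtain rfl : s = Sum.inl b := hs
    exact h.symm
  | act a =>
    intro i hi h
    refine ⟨QF.tru, {Sum.inr (Sum.inl a)}, ∅, Or.inl rfl, ?_, by simp, trivial⟩
    intro s hs
    obtain rfl : s = Sum.inr (Sum.inl a) := hs
    exact h
  | and f g ihf ihg =>
    intro i hi h
    obtain ⟨q1, S1, M1, h1, hS1, hM1, hC1⟩ := ihf i hi h.1
    obtain ⟨q2, S2, M2, h2, hS2, hM2, hC2⟩ := ihg i hi h.2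
    refine ⟨qand q1 q2, S1 ∪ S2, M1 ∪ M2, dand_intro h1 h2, ?_,
      by simp [hM1, hM2], contC_qand hC1 hC2⟩
    intro s hs
    rcases hs with hs | hs
    · exact hS1 s hs
    · exact hS2 s hs
  | or f g ihf ihg =>
    intro i hi h
    rcases h with h | h
    · obtain ⟨q1, S1, M1, h1, hS1, hM1, hC1⟩ := ihf i hi h
      obtain ⟨q2, M2, h2, hM2⟩ := padLt g
      refine ⟨qor q1 q2, S1 ∪ ∅, M1 ∪ M2, dor_intro h1 h2, ?_,
        by simp [hM1, hM2], contC_qor_left hC1 q2⟩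
      intro s hs
      rcases hs with hs | hs
      · exact hS1 s hs
      · exact absurd hs (by simp)
    · obtain ⟨q2, S2, M2, h2, hS2, hM2, hC2⟩ := ihg i hi h
      obtain ⟨q1, M1, h1, hM1⟩ := padLt f
      refine ⟨qor q1 q2, ∅ ∪ S2, M1 ∪ M2, dor_intro h1 h2, ?_,
        by simp [hM1, hM2], contC_qor_right hC2 q1⟩
      intro s hs
      rcases hs with hs | hs
      · exact absurd hs (by simp)
      · exact hS2 s hs
  | diaA a f ihf =>
    intro i hi h
    obtain ⟨⟨t, ht, hta⟩, hf⟩ := h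
    refine ⟨QF.of (LF.and (LF.act a) f), ∅, {false}, Or.inl rfl, by simp, by simp, ?_⟩
    exact ⟨⟨by omega, t, by simpa using ht, hta⟩, hf⟩
  | next f ihf =>
    intro i hi h
    exact ⟨QF.of f, ∅, {false}, Or.inl rfl, by simp, by simp, h.2⟩
  | ev f ihf =>
    intro i hi h
    obtain ⟨j, hj1, hj2, hj3⟩ := h
    rcases Nat.eq_or_lt_of_le hj1 with rfl | hjgt
    · obtain ⟨q1, S1, M1, h1, hS1, hM1, hC1⟩ := ihf i hi hj3
      have h2 : (QF.of (LF.ev f), ((∅ : Set (Sym B A X D)), ({false} : Set Bool))) ∈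
          dnext (QF.of (LF.ev f)) := Or.inl rfl
      refine ⟨_, S1 ∪ ∅, M1 ∪ {false}, dor_intro h1 h2, ?_,
        by simp [hM1], contC_qor_left hC1 _⟩
      intro s hs
      rcases hs with hs | hs
      · exact hS1 s hs
      · exact absurd hs (by simp)
    · obtain ⟨q1, M1, h1, hM1⟩ := padLt f
      have h2 : (QF.of (LF.ev f), ((∅ : Set (Sym B A X D)), ({false} : Set Bool))) ∈
          dnext (QF.of (LF.ev f)) := Or.inl rfl
      have hC2 : ContC M steps (QF.of (LF.ev f)) (i+1) := ⟨j, hjgt, hj2, hj3⟩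
      refine ⟨_, ∅ ∪ ∅, M1 ∪ {false}, dor_intro h1 h2, ?_,
        by simp [hM1], contC_qor_right hC2 q1⟩
      intro s hs
      rcases hs with hs | hs
      · exact absurd hs (by simp)
      · exact absurd hs (by simp)
  | glob f ihf =>
    intro i hi h
    have hf : Sat M steps f i := h i (le_refl _) (le_of_lt hi)
    obtain ⟨q1, S1, M1, h1, hS1, hM1, hC1⟩ := ihf i hi hf
    have h2 : (QF.of (LF.glob f), ((∅ : Set (Sym B A X D)), ({false} : Set Bool))) ∈
        dnext (QF.of (LF.glob f)) := Or.inl rfl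
    have h3 : ((QF.fls : QF B A X D), ((∅ : Set (Sym B A X D)), ({false} : Set Bool))) ∈
        (dlast : Set (QF B A X D × Lab B A X D)) := Or.inr rfl
    have h4 := dor_intro h2 h3
    have hC2 : ContC M steps (QF.of (LF.glob f)) (i+1) := by
      intro j hj1 hj2
      exact h j (by omega) hj2
    have hC4 : ContC M steps (qor (QF.of (LF.glob f)) QF.fls) (i+1) := hC2
    refine ⟨_, S1 ∪ (∅ ∪ ∅), M1 ∪ ({false} ∪ {false}), dand_intro h1 h4, ?_,
      by simp [hM1], contC_qand hC1 hC4⟩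
    intro s hs
    rcases hs with hs | hs
    · exact hS1 s hs
    · exact absurd hs (by simp)
  | untl f g ihf ihg =>
    intro i hi h
    obtain ⟨j, hj1, hj2, hj3, hj4⟩ := h
    rcases Nat.eq_or_lt_of_le hj1 with rfl | hjgt
    · obtain ⟨q1, S1, M1, h1, hS1, hM1, hC1⟩ := ihg i hi hj3
      obtain ⟨q2, M2, h2, hM2⟩ := padLt f
      have h3 : (QF.of (LF.untl f g), ((∅ : Set (Sym B A X D)), ({false} : Set Bool))) ∈
          dnext (QF.of (LF.untl f g)) := Or.inl rfl
      have h4 := dand_intro h2 h3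
      have h5 := dor_intro h1 h4
      refine ⟨_, S1 ∪ (∅ ∪ ∅), M1 ∪ (M2 ∪ {false}), h5, ?_,
        by simp [hM1, hM2], contC_qor_left hC1 _⟩
      intro s hs
      rcases hs with hs | hs
      · exact hS1 s hs
      · exact absurd hs (by simp)
    · have hfi : Sat M steps f i := hj4 i (le_refl _) hjgt
      obtain ⟨q2, S2, M2, h2, hS2, hM2, hC2⟩ := ihf i hi hfi
      obtain ⟨q1, M1, h1, hM1⟩ := padLt g
      have h3 : (QF.of (LF.untl f g), ((∅ : Set (Sym B A X D)), ({false} : Set Bool))) ∈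
          dnext (QF.of (LF.untl f g)) := Or.inl rfl
      have h4 := dand_intro h2 h3
      have h5 := dor_intro h1 h4
      have hCu : ContC M steps (QF.of (LF.untl f g)) (i+1) :=
        ⟨j, hjgt, hj2, hj3, fun k hk1 hk2 => hj4 k (by omega) hk2⟩
      have hCand : ContC M steps (qand q2 (QF.of (LF.untl f g))) (i+1) :=
        contC_qand hC2 hCu
      refine ⟨_, ∅ ∪ (S2 ∪ ∅), M1 ∪ (M2 ∪ {false}), h5, ?_,
        by simp [hM1, hM2], contC_qor_right hCand q1⟩
      intro s hs
      rcases hs with hs | hs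
      · exact absurd hs (by simp)
      · rcases hs with hs | hs
        · exact hS2 s hs
        · exact absurd hs (by simp)

end Aux4
section Aux5
variable {B A X D : Type} [Add D] [Sub D] [LT D] [LE D]

omit [Add D] [Sub D] [LT D] [LE D] in
lemma truRun (m : ℕ) :
    NfaSteps (Sum.inl (QF.tru : QF B A X D))
      (List.replicate m (∅ : Set (Sym B A X D))) (Sum.inl QF.tru) := by
  induction m with
  | zero => exact NfaSteps.nil _
  | succ m ih =>
    refine NfaSteps.cons ?_ ih
    exact ⟨QF.tru, QF.tru, (∅, ∅), rfl, rfl, rfl, by simp, Or.inl ⟨by simp, rfl⟩⟩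

lemma nfaComplete (M : DDSA B A X D) (steps : List (A × B × (X → D))) :
    ∀ (m i : ℕ), i + m = steps.length + 1 → i ≤ steps.length →
      ∀ f : LF B A X D, Sat M steps f i →
      ∃ ws s', ws.length = m ∧
        (∀ j ς, ws[j]? = some ς → ∀ s ∈ ς, SymTrue M steps (i + j) s) ∧
        NfaSteps (Sum.inl (QF.of f)) ws s' ∧
        (s' = Sum.inl QF.tru ∨ s' = Sum.inr ()) := by
  intro m
  induction m with
  | zero => intro i hlen hile f hf; omega
  | succ m ih =>
    intro i hlen hile f hf
    rcases Nat.lt_or_ge i steps.length with hi | hi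
    · -- not the last position
      obtain ⟨q', S, Mk, hmem, hS, hMt, hC⟩ := deltaComplete_lt M steps f i hi hf
      have htr : nfaTrans (Sum.inl (QF.of f)) S (Sum.inl q') :=
        ⟨QF.of f, q', (S, Mk), rfl, hmem, rfl, fun h => hMt h.1,
          Or.inl ⟨hMt, rfl⟩⟩
      cases q' with
      | tru =>
        refine ⟨S :: List.replicate m ∅, Sum.inl QF.tru, by simp, ?_,
          NfaSteps.cons htr (truRun m), Or.inl rfl⟩
        intro j ς hj s hs
        cases j with
        | zero =>
          obtain rfl : S = ς := by simpa using hj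
          simpa using hS s hs
        | succ j =>
          have : ς = ∅ := by
            have hj' : (List.replicate m (∅ : Set (Sym B A X D)))[j]? = some ς := by
              simpa using hj
            have := List.getElem?_replicate (n := m) (a := (∅ : Set (Sym B A X D))) (i := j)
            rcases Nat.lt_or_ge j m with h2 | h2
            · simp [List.getElem?_replicate, h2] at hj'
              exact hj'.symm
            · rw [List.getElem?_eq_none (by simpa using h2)] at hj'
              cases hj'
          subst this
          exact absurd hs (by simp)
      | fls => exact absurd hC (by simp [ContC])
      | of g =>
        have hg : Sat M steps g (i+1) := hC
        obtain ⟨ws', s', hlen', hgood', hsteps', hacc'⟩ :=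
          ih (i+1) (by omega) (by omega) g hg
        refine ⟨S :: ws', s', by simp [hlen'], ?_, NfaSteps.cons htr hsteps', hacc'⟩
        intro j ς hj s hs
        cases j with
        | zero =>
          obtain rfl : S = ς := by simpa using hj
          simpa using hS s hs
        | succ j =>
          have := hgood' j ς (by simpa using hj) s hs
          simpa [Nat.add_assoc, Nat.add_comm 1 j] using this
    · -- last position
      obtain rfl : i = steps.length := by omega
      obtain rfl : m = 0 := by omega
      obtain ⟨S, Mk, hmem, hS, hMf⟩ := deltaComplete_last M steps f hf
      by_cases hMt : true ∈ Mk
      · refine ⟨[S], Sum.inr (), rfl, ?_, ?_, Or.inr rfl⟩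
        · intro j ς hj s hs
          cases j with
          | zero =>
            obtain rfl : S = ς := by simpa using hj
            simpa using hS s hs
          | succ j => simp at hj
        · refine NfaSteps.cons ?_ (NfaSteps.nil _)
          exact ⟨QF.of f, QF.tru, (S, Mk), rfl, hmem, rfl, fun h => hMf h.2,
            Or.inr ⟨hMt, rfl, rfl⟩⟩
      · refine ⟨[S], Sum.inl QF.tru, rfl, ?_, ?_, Or.inl rfl⟩
        · intro j ς hj s hs
          cases j with
          | zero =>
            obtain rfl : S = ς := by simpa using hj
            simpa using hS s hs
          | succ j => simp at hj
        · refine NfaSteps.cons ?_ (NfaSteps.nil _)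
          exact ⟨QF.of f, QF.tru, (S, Mk), rfl, hmem, rfl, fun h => hMt h.1,
            Or.inl ⟨hMt, rfl⟩⟩

/-- constraint symbols of a quoted formula -/
def qcs : QF B A X D → Set (Constr X D)
  | .tru => ∅
  | .fls => ∅
  | .of f => f.constrs

omit [Add D] [Sub D] [LT D] [LE D] in
lemma qcs_qand (q1 q2 : QF B A X D) : qcs (qand q1 q2) ⊆ qcs q1 ∪ qcs q2 := by
  cases q1 <;> cases q2 <;> simp [qand, qcs, LF.constrs]

omit [Add D] [Sub D] [LT D] [LE D] in
lemma qcs_qor (q1 q2 : QF B A X D) : qcs (qor q1 q2) ⊆ qcs q1 ∪ qcs q2 := by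
  cases q1 <;> cases q2 <;> simp [qor, qcs, LF.constrs]

lemma deltaConstrs (f : LF B A X D) :
    ∀ q' S Mk, (q', (S, Mk)) ∈ delta f →
      (∀ c, Sum.inr (Sum.inr c) ∈ S → c ∈ f.constrs) ∧
      qcs q' ⊆ f.constrs := by
  induction f with
  | constr c =>
    intro q' S Mk hmem
    rcases mem_datom hmem with ⟨rfl, rfl, -⟩ | ⟨rfl, rfl, -⟩
    · exact ⟨fun c' hc' => by simpa [LF.constrs] using (by simpa using hc' : _),
        by simp [qcs]⟩
    · exact ⟨fun c' hc' => absurd hc' (by simp), by simp [qcs]⟩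
  | state b =>
    intro q' S Mk hmem
    rcases mem_datom hmem with ⟨rfl, rfl, -⟩ | ⟨rfl, rfl, -⟩
    · exact ⟨fun c' hc' => absurd hc' (by simp), by simp [qcs]⟩
    · exact ⟨fun c' hc' => absurd hc' (by simp), by simp [qcs]⟩
  | act a =>
    intro q' S Mk hmem
    rcases mem_datom hmem with ⟨rfl, rfl, -⟩ | ⟨rfl, rfl, -⟩
    · exact ⟨fun c' hc' => absurd hc' (by simp), by simp [qcs]⟩
    · exact ⟨fun c' hc' => absurd hc' (by simp), by simp [qcs]⟩
  | and f g ihf ihg =>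
    intro q' S Mk hmem
    obtain ⟨q1, S1, M1, q2, S2, M2, h1, h2, rfl, rfl, rfl⟩ := mem_dand hmem
    obtain ⟨hc1, hq1⟩ := ihf _ _ _ h1
    obtain ⟨hc2, hq2⟩ := ihg _ _ _ h2
    constructor
    · intro c hc
      rcases hc with hc | hc
      · exact Or.inl (hc1 c hc)
      · exact Or.inr (hc2 c hc)
    · exact (qcs_qand q1 q2).trans (Set.union_subset_union hq1 hq2)
  | or f g ihf ihg =>
    intro q' S Mk hmem
    obtain ⟨q1, S1, M1, q2, S2, M2, h1, h2, rfl, rfl, rfl⟩ := mem_dor hmem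
    obtain ⟨hc1, hq1⟩ := ihf _ _ _ h1
    obtain ⟨hc2, hq2⟩ := ihg _ _ _ h2
    constructor
    · intro c hc
      rcases hc with hc | hc
      · exact Or.inl (hc1 c hc)
      · exact Or.inr (hc2 c hc)
    · exact (qcs_qor q1 q2).trans (Set.union_subset_union hq1 hq2)
  | diaA a f ihf =>
    intro q' S Mk hmem
    rcases mem_dnext hmem with ⟨rfl, rfl, -⟩ | ⟨rfl, rfl, -⟩
    · exact ⟨fun c' hc' => absurd hc' (by simp),
        by simp [qcs, LF.constrs]⟩
    · exact ⟨fun c' hc' => absurd hc' (by simp), by simp [qcs]⟩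
  | next f ihf =>
    intro q' S Mk hmem
    rcases mem_dnext hmem with ⟨rfl, rfl, -⟩ | ⟨rfl, rfl, -⟩
    · exact ⟨fun c' hc' => absurd hc' (by simp), by simp [qcs, LF.constrs]⟩
    · exact ⟨fun c' hc' => absurd hc' (by simp), by simp [qcs]⟩
  | ev f ihf =>
    intro q' S Mk hmem
    obtain ⟨q1, S1, M1, q2, S2, M2, h1, h2, rfl, rfl, rfl⟩ := mem_dor hmem
    obtain ⟨hc1, hq1⟩ := ihf _ _ _ h1
    have h2' : (q2 = QF.of (LF.ev f) ∧ S2 = ∅) ∨ (q2 = QF.fls ∧ S2 = ∅) := by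
      rcases mem_dnext h2 with ⟨rfl, rfl, -⟩ | ⟨rfl, rfl, -⟩
      · exact Or.inl ⟨rfl, rfl⟩
      · exact Or.inr ⟨rfl, rfl⟩
    have hc2 : ∀ c, Sum.inr (Sum.inr c) ∈ S2 → c ∈ (LF.ev f).constrs := by
      rcases h2' with ⟨-, rfl⟩ | ⟨-, rfl⟩ <;> exact fun c hc => absurd hc (by simp)
    have hq2 : qcs q2 ⊆ (LF.ev f).constrs := by
      rcases h2' with ⟨rfl, -⟩ | ⟨rfl, -⟩ <;> simp [qcs, LF.constrs]
    constructor
    · intro c hc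
      rcases hc with hc | hc
      · exact hc1 c hc
      · exact hc2 c hc
    · exact (qcs_qor q1 q2).trans (Set.union_subset hq1 hq2)
  | glob f ihf =>
    intro q' S Mk hmem
    obtain ⟨q1, S1, M1, q2, S2, M2, h1, h2, rfl, rfl, rfl⟩ := mem_dand hmem
    obtain ⟨hc1, hq1⟩ := ihf _ _ _ h1
    obtain ⟨q3, S3, M3, q4, S4, M4, h3, h4, rfl, rfl, rfl⟩ := mem_dor h2
    have h3' : (q3 = QF.of (LF.glob f) ∧ S3 = ∅) ∨ (q3 = QF.fls ∧ S3 = ∅) := by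
      rcases mem_dnext h3 with ⟨rfl, rfl, -⟩ | ⟨rfl, rfl, -⟩
      · exact Or.inl ⟨rfl, rfl⟩
      · exact Or.inr ⟨rfl, rfl⟩
    have h4' : (q4 = QF.tru ∧ S4 = ∅) ∨ (q4 = QF.fls ∧ S4 = ∅) := by
      rcases mem_dlast h4 with ⟨rfl, rfl, -⟩ | ⟨rfl, rfl, -⟩
      · exact Or.inl ⟨rfl, rfl⟩
      · exact Or.inr ⟨rfl, rfl⟩
    have hq3 : qcs q3 ⊆ (LF.glob f).constrs := by
      rcases h3' with ⟨rfl, -⟩ | ⟨rfl, -⟩ <;> simp [qcs, LF.constrs]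
    have hq4 : qcs q4 ⊆ (LF.glob f).constrs := by
      rcases h4' with ⟨rfl, -⟩ | ⟨rfl, -⟩ <;> simp [qcs]
    have hq34 : qcs (qor q3 q4) ⊆ (LF.glob f).constrs :=
      (qcs_qor q3 q4).trans (Set.union_subset hq3 hq4)
    constructor
    · intro c hc
      rcases hc with hc | hc
      · exact hc1 c hc
      · rcases hc with hc | hc
        · rcases h3' with ⟨-, rfl⟩ | ⟨-, rfl⟩ <;> exact absurd hc (by simp)
        · rcases h4' with ⟨-, rfl⟩ | ⟨-, rfl⟩ <;> exact absurd hc (by simp)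
    · exact (qcs_qand q1 (qor q3 q4)).trans (Set.union_subset hq1 hq34)
  | untl f g ihf ihg =>
    intro q' S Mk hmem
    obtain ⟨q1, S1, M1, q2, S2, M2, h1, h2, rfl, rfl, rfl⟩ := mem_dor hmem
    obtain ⟨hc1, hq1⟩ := ihg _ _ _ h1
    obtain ⟨q3, S3, M3, q4, S4, M4, h3, h4, rfl, rfl, rfl⟩ := mem_dand h2
    obtain ⟨hc3, hq3⟩ := ihf _ _ _ h3
    have h4' : (q4 = QF.of (LF.untl f g) ∧ S4 = ∅) ∨ (q4 = QF.fls ∧ S4 = ∅) := by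
      rcases mem_dnext h4 with ⟨rfl, rfl, -⟩ | ⟨rfl, rfl, -⟩
      · exact Or.inl ⟨rfl, rfl⟩
      · exact Or.inr ⟨rfl, rfl⟩
    have hq1' : qcs q1 ⊆ (LF.untl f g).constrs :=
      fun c hc => Or.inr (hq1 hc)
    have hq3' : qcs q3 ⊆ (LF.untl f g).constrs :=
      fun c hc => Or.inl (hq3 hc)
    have hq4 : qcs q4 ⊆ (LF.untl f g).constrs := by
      rcases h4' with ⟨rfl, -⟩ | ⟨rfl, -⟩ <;> simp [qcs, LF.constrs]
    have hq34 : qcs (qand q3 q4) ⊆ (LF.untl f g).constrs :=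
      (qcs_qand q3 q4).trans (Set.union_subset hq3' hq4)
    constructor
    · intro c hc
      rcases hc with hc | hc
      · exact Or.inr (hc1 c hc)
      · rcases hc with hc | hc
        · exact Or.inl (hc3 c hc)
        · rcases h4' with ⟨-, rfl⟩ | ⟨-, rfl⟩ <;> exact absurd hc (by simp)
    · exact (qcs_qor q1 (qand q3 q4)).trans (Set.union_subset hq1' hq34)

lemma nfaTransBound {s s' : QF B A X D ⊕ Unit} {ς : Set (Sym B A X D)}
    {q : QF B A X D} (h : nfaTrans s ς s') (hs : s = Sum.inl q) :
    (∀ c, Sum.inr (Sum.inr c) ∈ ς → c ∈ qcs q) ∧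
    (∀ q'', s' = Sum.inl q'' → qcs q'' ⊆ qcs q) := by
  obtain ⟨q0, q', l, hq, hmem, hw, hcons, hbr⟩ := h
  obtain rfl : q = q0 := by rw [hs] at hq; simpa using hq
  subst hw
  cases q with
  | tru =>
    obtain ⟨hq', hl⟩ : q' = QF.tru ∧ l = (∅, ∅) := by
      have : (q', l) = (QF.tru, (∅, ∅)) := hmem
      exact ⟨congrArg Prod.fst this, congrArg Prod.snd this⟩
    subst hq' hl
    refine ⟨fun c hc => absurd hc (by simp), ?_⟩
    intro q'' hq''
    rcases hbr with ⟨-, rfl⟩ | ⟨h1, -, -⟩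
    · obtain rfl : q'' = QF.tru := by simpa using hq''.symm
      exact le_refl _
    · exact absurd h1 (by simp)
  | fls =>
    obtain ⟨hq', hl⟩ : q' = QF.fls ∧ l = (∅, ∅) := by
      have : (q', l) = (QF.fls, (∅, ∅)) := hmem
      exact ⟨congrArg Prod.fst this, congrArg Prod.snd this⟩
    subst hq' hl
    refine ⟨fun c hc => absurd hc (by simp), ?_⟩
    intro q'' hq''
    rcases hbr with ⟨-, rfl⟩ | ⟨h1, -, -⟩
    · obtain rfl : q'' = QF.fls := by simpa using hq''.symm
      exact le_refl _
    · exact absurd h1 (by simp)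
  | of f =>
    obtain ⟨hc, hq'⟩ := deltaConstrs f q' l.1 l.2 hmem
    refine ⟨hc, ?_⟩
    intro q'' hq''
    rcases hbr with ⟨-, rfl⟩ | ⟨-, rfl, rfl⟩
    · obtain rfl : q'' = q' := by simpa using hq''.symm
      exact hq'
    · exact absurd hq'' (by simp)

lemma nfaStepsBound {CC' : Set (Constr X D)} :
    ∀ {ws : List (Set (Sym B A X D))} {s s' : QF B A X D ⊕ Unit},
    NfaSteps s ws s' →
    (∀ q, s = Sum.inl q → qcs q ⊆ CC') →
    (∀ ς ∈ ws, ∀ c, Sum.inr (Sum.inr c) ∈ ς → c ∈ CC') ∧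
    (∀ q', s' = Sum.inl q' → qcs q' ⊆ CC') := by
  intro ws
  induction ws with
  | nil =>
    intro s s' h hs
    rcases nfaSteps_cases h with ⟨-, rfl⟩ | ⟨_, _, _, heq, -, -⟩
    · exact ⟨fun ς hς => absurd hς (by simp), hs⟩
    · cases heq
  | cons ς0 ws0 ih =>
    intro s s' h hs
    rcases nfaSteps_cases h with ⟨heq, -⟩ | ⟨ς, ws1, s1, heq, htr, hrest⟩
    · cases heq
    · obtain ⟨rfl, rfl⟩ : ς0 = ς ∧ ws0 = ws1 := by
        injection heq with h1 h2; exact ⟨h1, h2⟩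
      have hq : ∃ q, s = Sum.inl q := by
        obtain ⟨q0, q', l, hq, -⟩ := htr
        exact ⟨q0, hq⟩
      obtain ⟨q, rfl⟩ := hq
      obtain ⟨hc, hnext⟩ := nfaTransBound htr rfl
      have hsub := hs q rfl
      have ihh := ih hrest (fun q'' hq'' => le_trans (hnext q'' hq'') hsub)
      refine ⟨?_, ihh.2⟩
      intro ς' hς' c hc'
      rcases List.mem_cons.mp hς' with rfl | hmem2
      · exact hsub (hc c hc')
      · exact ihh.1 ς' hmem2 c hc'

omit [Add D] [Sub D] [LT D] [LE D] in
lemma nfaSteps_append {s s1 s2 : QF B A X D ⊕ Unit}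
    {ws : List (Set (Sym B A X D))} {ς : Set (Sym B A X D)}
    (h : NfaSteps s ws s1) (h2 : nfaTrans s1 ς s2) :
    NfaSteps s (ws ++ [ς]) s2 := by
  induction h with
  | nil => exact NfaSteps.cons h2 (NfaSteps.nil _)
  | cons htr hrest ih => exact NfaSteps.cons htr (ih h2)

end Aux5
section Aux6
variable {B A X D : Type} [Add D] [Sub D] [LT D] [LE D]

lemma updateSem_ext_some (M : DDSA B A X D) (P : (X → D) → Prop) (a : A) :
    (extD M).updateSem P (some a) = M.updateSem P a := rfl

lemma updateSem_ext_none (M : DDSA B A X D) (P : (X → D) → Prop) (α' : X → D) :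
    (extD M).updateSem P none α' ↔ ∃ α, P α ∧ ∀ v, α' v = α v := by
  constructor
  · rintro ⟨α, hP, hg, hfr⟩
    refine ⟨α, hP, fun v => hfr v ?_⟩
    intro hv
    simp [extD, DDSA.writes, Constr.vars] at hv
  · rintro ⟨α, hP, heq⟩
    exact ⟨α, hP, trivial, fun v _ => heq v⟩

lemma hist_concat (M : DDSA B A X D) (C0 : Set (Constr X D))
    (l : List (A × Set (Constr X D))) (a : A) (C : Set (Constr X D)) :
    M.hist C0 (l ++ [(a, C)]) =
      fun α => M.updateSem (M.hist C0 l) a α ∧ csHolds α C := by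
  simp [DDSA.hist, List.foldl_append]

def Chain (M : DDSA B A X D) : B → List (A × B × Set (Constr X D)) → Prop
  | _, [] => True
  | b, e :: l => M.trans b e.1 = some e.2.1 ∧ Chain M e.2.1 l

def endSt (M : DDSA B A X D) : B → List (A × B × Set (Constr X D)) → B
  | b, [] => b
  | _, e :: l => endSt M e.2.1 l

omit [Add D] [Sub D] [LT D] [LE D] in
lemma endSt_concat (M : DDSA B A X D) (b : B)
    (l : List (A × B × Set (Constr X D))) (e : A × B × Set (Constr X D)) :
    endSt M b (l ++ [e]) = e.2.1 := by
  induction l generalizing b with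
  | nil => rfl
  | cons e' l ih => exact ih e'.2.1

omit [Add D] [Sub D] [LT D] [LE D] in
lemma chain_concat (M : DDSA B A X D) (b : B)
    (l : List (A × B × Set (Constr X D))) (e : A × B × Set (Constr X D))
    (hc : Chain M b l) (ht : M.trans (endSt M b l) e.1 = some e.2.1) :
    Chain M b (l ++ [e]) := by
  induction l generalizing b with
  | nil => exact ⟨ht, trivial⟩
  | cons e' l ih => exact ⟨hc.1, ih e'.2.1 hc.2 ht⟩

omit [Add D] [Sub D] [LT D] [LE D] in
lemma chain_concat_inv (M : DDSA B A X D) (b : B)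
    (l : List (A × B × Set (Constr X D))) (e : A × B × Set (Constr X D))
    (hc : Chain M b (l ++ [e])) :
    Chain M b l ∧ M.trans (endSt M b l) e.1 = some e.2.1 := by
  induction l generalizing b with
  | nil => exact ⟨trivial, hc.1⟩
  | cons e' l ih =>
    obtain ⟨h1, h2⟩ := hc
    obtain ⟨h3, h4⟩ := ih e'.2.1 h2
    exact ⟨⟨h1, h3⟩, h4⟩

omit [Add D] [Sub D] [LT D] [LE D] in
lemma confAt_prefix (M : DDSA B A X D) (l : List (A × B × (X → D)))
    (t : A × B × (X → D)) (j : ℕ) (hj : j ≤ l.length) :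
    confAt M (l ++ [t]) j = confAt M l j := by
  cases j with
  | zero => rfl
  | succ j =>
    have : j < l.length := by omega
    simp [confAt, List.getElem?_append_left this]

/-- From a satisfying assignment of a history constraint, reconstruct a run. -/
lemma histRun (M : DDSA B A X D) (C0 : Set (Constr X D)) :
    ∀ (tr : List (A × B × Set (Constr X D))), Chain M M.init tr →
    ∀ α, M.hist C0 (tr.map (fun e => (e.1, e.2.2))) α →
    ∃ rsteps : List (A × B × (X → D)),
      M.IsRun rsteps ∧ rsteps.length = tr.length ∧
      (∀ j : ℕ, rsteps[j]?.map (fun (t : A × B × (X → D)) => (t.1, t.2.1)) =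
        tr[j]?.map (fun (e : A × B × Set (Constr X D)) => (e.1, e.2.1))) ∧
      (confAt M rsteps tr.length).2 = α ∧
      (confAt M rsteps tr.length).1 = endSt M M.init tr ∧
      csHolds M.a0 C0 ∧
      (∀ j e, tr[j]? = some e → csHolds (confAt M rsteps (j+1)).2 e.2.2) := by
  intro tr
  induction tr using List.reverseRecOn with
  | nil =>
    intro hc α hh
    obtain ⟨ha, hcs⟩ : (∀ v, α v = M.a0 v) ∧ csHolds α C0 := hh
    have hα : α = M.a0 := funext ha
    subst hα
    refine ⟨[], ?_, rfl, fun j => by simp, rfl, rfl, hcs, ?_⟩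
    · intro k t ht
      simp at ht
    · intro j e he
      simp at he
  | append_singleton tr e ih =>
    intro hc α hh
    obtain ⟨hc1, hc2⟩ := chain_concat_inv M M.init tr e hc
    rw [show ((tr ++ [e]).map (fun (e : A × B × Set (Constr X D)) => (e.1, e.2.2)))
        = tr.map (fun (e : A × B × Set (Constr X D)) => (e.1, e.2.2)) ++ [(e.1, e.2.2)] by simp,
      hist_concat] at hh
    obtain ⟨⟨α0, h0, hg, hfr⟩, hcs⟩ := hh
    obtain ⟨rsteps, hrun, hlen, hcorr, hend2, hend1, hC0, hCs⟩ := ih hc1 α0 h0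
    refine ⟨rsteps ++ [(e.1, e.2.1, α)], ?_, by simp [hlen], ?_, ?_, ?_, hC0, ?_⟩
    · -- IsRun
      intro k t ht
      rcases Nat.lt_or_ge k rsteps.length with hk | hk
      · rw [List.getElem?_append_left hk] at ht
        have := hrun k t ht
        rw [confAt_prefix M rsteps _ k (le_of_lt hk)]
        exact this
      · have hkeq : k = rsteps.length := by
          by_contra hne
          have : k ≥ rsteps.length + 1 := by omega
          rw [List.getElem?_eq_none (by simp; omega)] at ht
          cases ht
        subst hkeq
        have : t = (e.1, e.2.1, α) := by
          rw [List.getElem?_concat_length] at ht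
          exact (Option.some.injEq .. ▸ ht).symm
        subst this
        rw [confAt_prefix M rsteps _ rsteps.length (le_refl _), hlen]
        rw [show (confAt M rsteps tr.length).1 = endSt M M.init tr from hend1]
        refine ⟨hc2, ?_, ?_⟩
        · rw [show (confAt M rsteps tr.length).2 = α0 from hend2]
          exact hg
        · intro v hv
          rw [show (confAt M rsteps tr.length).2 = α0 from hend2]
          exact hfr v hv
    · -- correspondence
      intro j
      rcases Nat.lt_or_ge j rsteps.length with hj | hj
      · rw [List.getElem?_append_left hj, List.getElem?_append_left (hlen ▸ hj)]
        exact hcorr j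
      · rcases Nat.eq_or_lt_of_le hj with rfl | hj2
        · rw [List.getElem?_concat_length, hlen, List.getElem?_concat_length]
          rfl
        · rw [List.getElem?_eq_none (by simp; omega),
            List.getElem?_eq_none (by simp [hlen] at hj2 ⊢; omega)]
          rfl
    · -- final assignment
      simp only [List.length_append, List.length_singleton]
      have : (rsteps ++ [(e.1, e.2.1, α)])[tr.length]? = some (e.1, e.2.1, α) := by
        rw [← hlen, List.getElem?_concat_length]
      simp [confAt, this]
    · -- final state
      simp only [List.length_append, List.length_singleton]
      have : (rsteps ++ [(e.1, e.2.1, α)])[tr.length]? = some (e.1, e.2.1, α) := by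
        rw [← hlen, List.getElem?_concat_length]
      simp [confAt, this, endSt_concat]
    · -- constraints
      intro j e' he'
      rcases Nat.lt_or_ge j tr.length with hj | hj
      · rw [List.getElem?_append_left hj] at he'
        rw [confAt_prefix M rsteps _ (j+1) (by omega)]
        exact hCs j e' he'
      · rcases Nat.eq_or_lt_of_le hj with rfl | hj2
        · rw [List.getElem?_concat_length] at he'
          obtain rfl : e = e' := by simpa using he'
          have : (rsteps ++ [(e.1, e.2.1, α)])[tr.length]? = some (e.1, e.2.1, α) := by
            rw [← hlen, List.getElem?_concat_length]
          simpa [confAt, this] using hcs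
        · rw [List.getElem?_eq_none (by simp; omega)] at he'
          cases he'

end Aux6
section Aux7
variable {B A X D : Type} [Add D] [Sub D] [LT D] [LE D]

lemma buildSuffix (M : DDSA B A X D) (CC : Set (Constr X D))
    (Φ : Set (B × ((X → D) → Prop)))
    (sim : ((X → D) → Prop) → ((X → D) → Prop) → Prop)
    (hhs : M.IsHistorySet CC Φ)
    (hsim : ∀ P Q : (X → D) → Prop, eqv P Q → sim P Q)
    (steps : List (A × B × (X → D))) (hrun : M.IsRun steps) :
    ∀ (ws2 : List (Set (Sym B A X D))) (s s' : QF B A X D ⊕ Unit),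
      NfaSteps s ws2 s' →
      ∀ j : ℕ, j + ws2.length = steps.length →
      (∀ k ς, ws2[k]? = some ς → ∀ sy ∈ ς, SymTrue M steps (j + 1 + k) sy) →
      (∀ ς ∈ ws2, ∀ c, Sum.inr (Sum.inr c) ∈ ς → c ∈ CC) →
      ∀ P, ((confAt M steps j).1, P) ∈ Φ → P (confAt M steps j).2 →
      ∃ P', Relation.ReflTransGen (prodStep M Φ sim)
        (some (confAt M steps j).1, s, P)
        (some (confAt M steps steps.length).1, s', P') := by
  intro ws2
  induction ws2 with
  | nil =>
    intro s s' hns j hlen hgood hCC P hPΦ hPh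
    rcases nfaSteps_cases hns with ⟨-, rfl⟩ | ⟨_, _, _, heq, -, -⟩
    · obtain rfl : j = steps.length := by simpa using hlen
      exact ⟨P, Relation.ReflTransGen.refl⟩
    · cases heq
  | cons ς ws2' ih =>
    intro s s' hns j hlen hgood hCC P hPΦ hPh
    rcases nfaSteps_cases hns with ⟨heq, -⟩ | ⟨ςx, ws1x, s1, heq, htr, hrest⟩
    · cases heq
    · obtain ⟨rfl, rfl⟩ : ςx = ς ∧ ws1x = ws2' := by
        injection heq with h1 h2; exact ⟨h1.symm, h2.symm⟩
      have hjlt : j < steps.length := by simp at hlen; omega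
      have hj' : steps[j]? = some steps[j] := List.getElem?_eq_getElem hjlt
      set t := steps[j] with ht
      have hstep := hrun j t hj'
      obtain ⟨htrans, hguard, hframe⟩ := hstep
      have hconf : confAt M steps (j+1) = (t.2.1, t.2.2) := by
        simp [confAt, hj']
      have hgood0 : ∀ sy ∈ ςx, SymTrue M steps (j+1) sy := by
        intro sy hsy
        have := hgood 0 ςx (by simp) sy hsy
        simpa using this
      have hsymB : ∀ b0, Sum.inl b0 ∈ ςx → b0 = t.2.1 := by
        intro b0 hb0
        have h := hgood0 _ hb0
        simp only [SymTrue] at h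
        rw [hconf] at h
        exact h
      have hsymA : ∀ a0, Sum.inr (Sum.inl a0) ∈ ςx → a0 = t.1 := by
        intro a0 ha0
        have h := hgood0 _ ha0
        simp only [SymTrue] at h
        obtain ⟨-, t', ht', ht'a⟩ := h
        rw [show j + 1 - 1 = j from rfl, hj'] at ht'
        rw [← ht'a]
        have : t' = t := by simpa using ht'.symm
        rw [this]
      have hsymC : ∀ c, Sum.inr (Sum.inr c) ∈ ςx → c.holds t.2.2 := by
        intro c hc
        have h := hgood0 _ hc
        simp only [SymTrue] at h
        rw [hconf] at h
        exact h
      -- the χ of this step holds at t.2.2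
      have hχ : M.updateSem P t.1 t.2.2 ∧
          ∀ c, Sum.inr (Sum.inr c) ∈ ςx → c.holds t.2.2 := by
        exact ⟨⟨(confAt M steps j).2, hPh, hguard, hframe⟩, hsymC⟩
      -- representative in Φ
      have hCsub : {c | Sum.inr (Sum.inr c) ∈ ςx} ⊆ CC :=
        fun c hc => hCC ςx (by simp) c hc
      obtain ⟨Q, hQΦ, hQeqv⟩ := hhs.2 (confAt M steps j).1 P hPΦ t.1 t.2.1
        htrans {c | Sum.inr (Sum.inr c) ∈ ςx} hCsub
      have hQh : Q t.2.2 := (hQeqv t.2.2).mpr ⟨hχ.1, hχ.2⟩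
      have hQΦ' : ((confAt M steps (j+1)).1, Q) ∈ Φ := by
        rw [hconf]; exact hQΦ
      have hQh' : Q (confAt M steps (j+1)).2 := by
        rw [hconf]; exact hQh
      have hgood' : ∀ k ςx', ws1x[k]? = some ςx' →
          ∀ sy ∈ ςx', SymTrue M steps (j + 1 + 1 + k) sy := by
        intro k ςx' hk sy hsy
        have := hgood (k+1) ςx' (by simpa using hk) sy hsy
        have harith : j + 1 + (k + 1) = j + 1 + 1 + k := by omega
        rwa [harith] at this
      have hCC' : ∀ ςx' ∈ ws1x, ∀ c, Sum.inr (Sum.inr c) ∈ ςx' → c ∈ CC :=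
        fun ςx' hςx' => hCC ςx' (by simp [hςx'])
      obtain ⟨P', hpath⟩ := ih s1 s' hrest (j+1) (by simp at hlen ⊢; omega)
        hgood' hCC' Q hQΦ' hQh'
      refine ⟨P', Relation.ReflTransGen.head
        (b := (some t.2.1, s1, Q)) ?_ ?_⟩
      · -- the product step
        refine ⟨some t.1, t.2.1, ςx, ?_, rfl, htr, ?_, ?_, ?_, ?_, ?_⟩
        · show ((extD M).trans (some (confAt M steps j).1) (some t.1)) = some (some t.2.1)
          show (M.trans (confAt M steps j).1 t.1).map some = some (some t.2.1)
          rw [htrans]; rfl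
        · exact hsymB
        · intro a0 ha0
          rw [hsymA a0 ha0]
        · exact ⟨t.2.2, hχ.1, hχ.2⟩
        · exact hsim Q _ (fun α => (hQeqv α).trans Iff.rfl)
        · exact hQΦ
      · -- the rest of the path
        rw [show (some t.2.1 : Option B) = some (confAt M steps (j+1)).1 by rw [hconf]]
        exact hpath

end Aux7
section Aux8
variable {B A X D : Type} [Add D] [Sub D] [LT D] [LE D]

def stAt (M : DDSA B A X D) (tr : List (A × B × Set (Constr X D))) : ℕ → B
  | 0 => M.init
  | j + 1 => ((tr[j]?).map (fun e => e.2.1)).getD M.init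

def csAt (C0 : Set (Constr X D)) (tr : List (A × B × Set (Constr X D))) :
    ℕ → Set (Constr X D)
  | 0 => C0
  | j + 1 => ((tr[j]?).map (fun e => e.2.2)).getD ∅

omit [Add D] [Sub D] [LT D] [LE D] in
lemma stAt_prefix (M : DDSA B A X D) (tr : List (A × B × Set (Constr X D)))
    (e : A × B × Set (Constr X D)) (j : ℕ) (hj : j ≤ tr.length) :
    stAt M (tr ++ [e]) j = stAt M tr j := by
  cases j with
  | zero => rfl
  | succ k =>
    have hk : k < tr.length := by omega
    simp [stAt, List.getElem?_append_left hk]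

omit [Add D] [Sub D] [LT D] [LE D] in
lemma csAt_prefix (C0 : Set (Constr X D)) (tr : List (A × B × Set (Constr X D)))
    (e : A × B × Set (Constr X D)) (j : ℕ) (hj : j ≤ tr.length) :
    csAt C0 (tr ++ [e]) j = csAt C0 tr j := by
  cases j with
  | zero => rfl
  | succ k =>
    have hk : k < tr.length := by omega
    simp [csAt, List.getElem?_append_left hk]

/-- The invariant maintained along a product run. -/
def Inv (M : DDSA B A X D) (CC : Set (Constr X D))
    (Φ : Set (B × ((X → D) → Prop)))
    (sim : ((X → D) → Prop) → ((X → D) → Prop) → Prop) (ψ : LF B A X D)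
    (p : Option B × (QF B A X D ⊕ Unit) × ((X → D) → Prop)) : Prop :=
  ∃ (C0 : Set (Constr X D)) (tr : List (A × B × Set (Constr X D)))
    (ws : List (Set (Sym B A X D))) (Qh : (X → D) → Prop),
    C0 ⊆ CC ∧ (∀ e ∈ tr, e.2.2 ⊆ CC) ∧
    Chain M M.init tr ∧
    p.1 = some (endSt M M.init tr) ∧
    ws.length = tr.length + 1 ∧
    (∀ (j : ℕ) ς, ws[j]? = some ς →
      (∀ b0, Sum.inl b0 ∈ ς → b0 = stAt M tr j) ∧
      (∀ a0, Sum.inr (Sum.inl a0) ∈ ς → 1 ≤ j ∧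
        ∃ e, tr[j-1]? = some e ∧ e.1 = a0) ∧
      (∀ c, Sum.inr (Sum.inr c) ∈ ς → c ∈ csAt C0 tr j)) ∧
    NfaSteps (Sum.inl (QF.of ψ)) ws p.2.1 ∧
    (endSt M M.init tr, p.2.2) ∈ Φ ∧
    (endSt M M.init tr, Qh) ∈ Φ ∧
    eqv Qh (M.hist C0 (tr.map (fun (e : A × B × Set (Constr X D)) => (e.1, e.2.2)))) ∧
    sim p.2.2 Qh ∧
    (∃ α, p.2.2 α)

lemma invMain (M : DDSA B A X D) (CC : Set (Constr X D))
    (Φ : Set (B × ((X → D) → Prop)))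
    (sim : ((X → D) → Prop) → ((X → D) → Prop) → Prop)
    (hhs : M.IsHistorySet CC Φ) (hsimEquiv : Equivalence sim)
    (hsimOfEqv : ∀ P Q : (X → D) → Prop, eqv P Q → sim P Q)
    (hequisat : ∀ b P Q, (b, P) ∈ Φ → (b, Q) ∈ Φ → sim P Q →
      ((∃ α, P α) ↔ (∃ α, Q α)))
    (hsimUpd : ∀ b P Q a b' C, (b, P) ∈ Φ → (b, Q) ∈ Φ → sim P Q →
      M.trans b a = some b' → C ⊆ CC →
      sim (fun α => M.updateSem P a α ∧ csHolds α C)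
        (fun α => M.updateSem Q a α ∧ csHolds α C))
    (ψ : LF B A X D) (hψ : ψ.constrs ⊆ CC) :
    ∀ p, Relation.ReflTransGen (prodStep M Φ sim)
      (none, Sum.inl (QF.of ψ), fun α => ∀ v, α v = M.a0 v) p →
      p = (none, Sum.inl (QF.of ψ), fun α => ∀ v, α v = M.a0 v) ∨
      Inv M CC Φ sim ψ p := by
  have hqcsψ : ∀ q : QF B A X D,
      (Sum.inl (QF.of ψ) : QF B A X D ⊕ Unit) = Sum.inl q → qcs q ⊆ CC := by
    intro q hq
    obtain rfl : q = QF.of ψ := by simpa using hq.symm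
    exact hψ
  intro p hpath
  induction hpath with
  | refl => exact Or.inl rfl
  | @tail b c hab hbc ih =>
    right
    obtain ⟨a, b'', ς, htrans, hc1, htr, hsymB, hsymA, hsat, hsimχ, hΦ⟩ := hbc
    rcases ih with rfl | hInv
    · -- the dummy first step
      obtain rfl : a = none := by
        cases a with
        | none => rfl
        | some a' => simp [extD] at htrans
      obtain rfl : b'' = M.init := by
        have : some (some M.init) = some (some b'') := htrans
        simpa using this.symm
      have hC0sub : {c | Sum.inr (Sum.inr c) ∈ ς} ⊆ CC := by
        intro c hc
        exact hψ ((nfaTransBound htr rfl).1 c hc)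
      obtain ⟨Qh, hQhΦ, hQheqv⟩ := hhs.1 _ hC0sub
      have hiff : ∀ α : X → D,
          ((extD M).updateSem (fun α => ∀ v, α v = M.a0 v) none α ∧
            ∀ cc, Sum.inr (Sum.inr cc) ∈ ς → cc.holds α) ↔
          M.initPred {cc | Sum.inr (Sum.inr cc) ∈ ς} α := by
        intro α
        constructor
        · rintro ⟨hu, hcs⟩
          obtain ⟨β, hβ, heq⟩ := (updateSem_ext_none M _ α).mp hu
          exact ⟨fun v => (heq v).trans (hβ v), hcs⟩
        · rintro ⟨h1, h2⟩
          exact ⟨(updateSem_ext_none M _ α).mpr ⟨M.a0, fun v => rfl, h1⟩, h2⟩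
      have hQheqv' : eqv Qh
          (fun α => (extD M).updateSem (fun α => ∀ v, α v = M.a0 v) none α ∧
            ∀ cc, Sum.inr (Sum.inr cc) ∈ ς → cc.holds α) :=
        fun α => (hQheqv α).trans (hiff α).symm
      have hsimQh : sim c.2.2 Qh :=
        hsimEquiv.trans hsimχ (hsimEquiv.symm (hsimOfEqv _ _ hQheqv'))
      have hQhsat : ∃ α, Qh α := by
        obtain ⟨α, hα⟩ := hsat
        exact ⟨α, (hQheqv' α).mpr hα⟩
      have hcsat : ∃ α, c.2.2 α :=
        (hequisat M.init c.2.2 Qh hΦ hQhΦ hsimQh).mpr hQhsat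
      refine ⟨{cc | Sum.inr (Sum.inr cc) ∈ ς}, [], [ς], Qh, hC0sub,
        by simp, trivial, hc1, rfl, ?_, ?_, hΦ, hQhΦ, hQheqv, hsimQh, hcsat⟩
      · intro j ς' hj
        cases j with
        | zero =>
          obtain rfl : ς = ς' := by simpa using hj
          refine ⟨?_, ?_, fun c hc => hc⟩
          · intro b0 hb0
            exact hsymB b0 hb0
          · intro a0 ha0
            exact absurd (hsymA a0 ha0) (by simp)
        | succ j => simp at hj
      · exact NfaSteps.cons htr (NfaSteps.nil _)
    · -- a regular step
      obtain ⟨C0, tr, ws, Qh, hC0sub, htrsub, hChain, hb1, hwslen, hletters,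
        hnfa, hbΦ, hQhΦ, hQheqv, hsimbQh, hbsat⟩ := hInv
      rw [hb1] at htrans
      obtain ⟨a', rfl⟩ : ∃ a', a = some a' := by
        cases a with
        | none => simp [extD] at htrans
        | some a' => exact ⟨a', rfl⟩
      have htrM : M.trans (endSt M M.init tr) a' = some b'' := by
        have : (M.trans (endSt M M.init tr) a').map some = some (some b'') := htrans
        rcases Option.map_eq_some_iff.mp this with ⟨x, hx, hx2⟩
        obtain rfl : x = b'' := by simpa using hx2
        exact hx
      -- the source NFA state
      have hstates := nfaStepsBound (CC' := CC) hnfa hqcsψ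
      obtain ⟨qcur, hqcur⟩ : ∃ q, b.2.1 = Sum.inl q := by
        obtain ⟨q0, q', l, hq, -⟩ := htr
        exact ⟨q0, hq⟩
      have hC'sub : {cc | Sum.inr (Sum.inr cc) ∈ ς} ⊆ CC := by
        intro cc hcc
        exact (hstates.2 qcur hqcur) ((nfaTransBound htr hqcur).1 cc hcc)
      -- representatives
      obtain ⟨Qh', hQh'Φ, hQh'eqv⟩ := hhs.2 _ Qh hQhΦ a' b'' htrM _ hC'sub
      obtain ⟨Qχ, hQχΦ, hQχeqv⟩ := hhs.2 _ b.2.2 hbΦ a' b'' htrM _ hC'sub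
      -- χ in M-form
      have hχM : eqv
          (fun α => (extD M).updateSem b.2.2 (some a') α ∧
            ∀ cc, Sum.inr (Sum.inr cc) ∈ ς → cc.holds α)
          (fun α => M.updateSem b.2.2 a' α ∧
            csHolds α {cc | Sum.inr (Sum.inr cc) ∈ ς}) :=
        fun α => Iff.rfl
      have hsimχQχ : sim c.2.2 Qχ :=
        hsimEquiv.trans hsimχ
          (hsimEquiv.trans (hsimOfEqv _ _ hχM)
            (hsimEquiv.symm (hsimOfEqv _ _ hQχeqv)))
      have hQχsat : ∃ α, Qχ α := by
        obtain ⟨α, hα⟩ := hsat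
        exact ⟨α, (hQχeqv α).mpr ((hχM α).mp hα)⟩
      have hcsat : ∃ α, c.2.2 α :=
        (hequisat b'' c.2.2 Qχ hΦ hQχΦ hsimχQχ).mpr hQχsat
      have hsimUpdStep := hsimUpd _ b.2.2 Qh a' b''
        {cc | Sum.inr (Sum.inr cc) ∈ ς} hbΦ hQhΦ hsimbQh htrM hC'sub
      have hsimcQh' : sim c.2.2 Qh' :=
        hsimEquiv.trans hsimχ
          (hsimEquiv.trans (hsimOfEqv _ _ hχM)
            (hsimEquiv.trans hsimUpdStep
              (hsimEquiv.symm (hsimOfEqv _ _ hQh'eqv))))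
      -- history equivalence for the new representative
      have hcong : eqv
          (fun α => M.updateSem Qh a' α ∧ csHolds α {cc | Sum.inr (Sum.inr cc) ∈ ς})
          (fun α => M.updateSem
            (M.hist C0 (tr.map (fun (e : A × B × Set (Constr X D)) => (e.1, e.2.2)))) a' α ∧
            csHolds α {cc | Sum.inr (Sum.inr cc) ∈ ς}) := by
        intro α
        constructor
        · rintro ⟨⟨β, hβ, hd⟩, hcs⟩
          exact ⟨⟨β, (hQheqv β).mp hβ, hd⟩, hcs⟩
        · rintro ⟨⟨β, hβ, hd⟩, hcs⟩
          exact ⟨⟨β, (hQheqv β).mpr hβ, hd⟩, hcs⟩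
      have hhist' : M.hist C0
          ((tr ++ [(a', b'', {cc | Sum.inr (Sum.inr cc) ∈ ς})]).map
            (fun (e : A × B × Set (Constr X D)) => (e.1, e.2.2))) =
          fun α => M.updateSem
            (M.hist C0 (tr.map (fun (e : A × B × Set (Constr X D)) => (e.1, e.2.2)))) a' α ∧
            csHolds α {cc | Sum.inr (Sum.inr cc) ∈ ς} := by
        rw [show ((tr ++ [(a', b'', {cc | Sum.inr (Sum.inr cc) ∈ ς})]).map
            (fun (e : A × B × Set (Constr X D)) => (e.1, e.2.2))) =
            tr.map (fun (e : A × B × Set (Constr X D)) => (e.1, e.2.2)) ++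
              [(a', {cc | Sum.inr (Sum.inr cc) ∈ ς})] by simp,
          hist_concat]
      have hQh'hist : eqv Qh' (M.hist C0
          ((tr ++ [(a', b'', {cc | Sum.inr (Sum.inr cc) ∈ ς})]).map
            (fun (e : A × B × Set (Constr X D)) => (e.1, e.2.2)))) := by
        rw [hhist']
        exact fun α => (hQh'eqv α).trans (hcong α)
      -- assemble the invariant
      refine ⟨C0, tr ++ [(a', b'', {cc | Sum.inr (Sum.inr cc) ∈ ς})], ws ++ [ς], Qh',
        hC0sub, ?_, ?_, ?_, by simp [hwslen], ?_, ?_, ?_, ?_, hQh'hist,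
        hsimcQh', hcsat⟩
      · intro e he
        rcases List.mem_append.mp he with he | he
        · exact htrsub e he
        · obtain rfl : e = (a', b'', {cc | Sum.inr (Sum.inr cc) ∈ ς}) := by
            simpa using he
          exact hC'sub
      · exact chain_concat M _ tr _ hChain htrM
      · rw [hc1, endSt_concat]
      · -- letters
        intro j ς' hj
        rcases Nat.lt_or_ge j ws.length with hjlt | hjge
        · rw [List.getElem?_append_left hjlt] at hj
          obtain ⟨hB, hA, hC⟩ := hletters j ς' hj
          have hjle : j ≤ tr.length := by omega
          refine ⟨?_, ?_, ?_⟩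
          · intro b0 hb0
            rw [stAt_prefix M tr _ j hjle]
            exact hB b0 hb0
          · intro a0 ha0
            obtain ⟨h1, e, he, hea⟩ := hA a0 ha0
            refine ⟨h1, e, ?_, hea⟩
            have : j - 1 < tr.length := by omega
            rw [List.getElem?_append_left this]
            exact he
          · intro cc hcc
            rw [csAt_prefix C0 tr _ j hjle]
            exact hC cc hcc
        · have hjeq : j = ws.length := by
            by_contra hne
            have : j ≥ ws.length + 1 := by omega
            rw [List.getElem?_eq_none (by simp; omega)] at hj
            cases hj
          subst hjeq
          have hj' : (ws ++ [ς])[ws.length]? = some ς := List.getElem?_concat_length ..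
          obtain rfl : ς = ς' := by
            rw [hj'] at hj
            simpa using hj
          have htrcat : (tr ++ [(a', b'', {cc | Sum.inr (Sum.inr cc) ∈ ς})])[tr.length]?
              = some (a', b'', {cc | Sum.inr (Sum.inr cc) ∈ ς}) :=
            List.getElem?_concat_length ..
          refine ⟨?_, ?_, ?_⟩
          · intro b0 hb0
            rw [hwslen]
            simp only [stAt, htrcat]
            exact hsymB b0 hb0
          · intro a0 ha0
            have := hsymA a0 ha0
            obtain rfl : a' = a0 := by simpa using this
            refine ⟨by omega, (a', b'', {cc | Sum.inr (Sum.inr cc) ∈ ς}), ?_, rfl⟩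
            rw [hwslen]
            simpa using htrcat
          · intro cc hcc
            rw [hwslen]
            simp only [csAt, htrcat]
            exact hcc
      · exact nfaSteps_append hnfa htr
      · rw [endSt_concat]
        exact hΦ
      · rw [endSt_concat]
        exact hQh'Φ

end Aux8
/-- Theorem 3.  For a DDSA `M` with finite summary
`(Φ, ∼)` for `CC` and a formula `ψ ∈ L` whose constraints belong to `CC`,
the language of the product automaton `N_B^ψ` is non-empty iff `M` has a run
ending in a final state that satisfies `ψ` (a witness for `ψ`). -/
theorem product_automaton_correctness (B A X D : Type)
    [Add D] [Sub D] [LT D] [LE D]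
    (M : DDSA B A X D) (CC : Set (Constr X D))
    (Φ : Set (B × ((X → D) → Prop)))
    (sim : ((X → D) → Prop) → ((X → D) → Prop) → Prop)
    (hsum : IsFiniteSummary M CC Φ sim)
    (hfinclasses : ∃ S : Set ((X → D) → Prop), S.Finite ∧
      ∀ P, ∃ Q ∈ S, sim P Q)
    (ψ : LF B A X D) (hψ : ψ.constrs ⊆ CC) :
    (∃ p, Relation.ReflTransGen (prodStep M Φ sim)
        (none, Sum.inl (QF.of ψ), fun α => ∀ v, α v = M.a0 v) p ∧
      (∃ bf ∈ M.final, p.1 = some bf) ∧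
      (p.2.1 = Sum.inl QF.tru ∨ p.2.1 = Sum.inr ())) ↔
    (∃ steps, M.IsRun steps ∧ (confAt M steps steps.length).1 ∈ M.final ∧
      Sat M steps ψ 0) := by
  obtain ⟨hhs, hsimEquiv, hsimOfEqv, -, hequisat, hsimUpd, -⟩ := hsum
  clear hfinclasses
  constructor
  · -- product language non-empty → witness run
    rintro ⟨p, hpath, ⟨bf, hbf, hp1⟩, hacc⟩
    rcases invMain M CC Φ sim hhs hsimEquiv hsimOfEqv hequisat hsimUpd ψ hψ
      p hpath with rfl | hInv
    · simp at hp1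
    obtain ⟨C0, tr, ws, Qh, hC0sub, htrsub, hChain, hb1, hwslen, hletters,
      hnfa, hbΦ, hQhΦ, hQheqv, hsimbQh, hbsat⟩ := hInv
    obtain rfl : bf = endSt M M.init tr := by
      rw [hp1] at hb1
      simpa using hb1
    -- satisfiability of the full history constraint
    have hQhsat : ∃ α, Qh α :=
      (hequisat _ p.2.2 Qh hbΦ hQhΦ hsimbQh).mp hbsat
    obtain ⟨αf, hαf⟩ := hQhsat
    have hhistsat := (hQheqv αf).mp hαf
    obtain ⟨rsteps, hrunR, hlenR, hcorr, -, hend1, hC0cs, hCscs⟩ :=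
      histRun M C0 tr hChain αf hhistsat
    refine ⟨rsteps, hrunR, ?_, ?_⟩
    · rw [hlenR, hend1]
      exact hbf
    · -- satisfaction, via NFA soundness
      have hgood : ∀ (j : ℕ) ς, ws[j]? = some ς →
          ∀ sy ∈ ς, SymTrue M rsteps (0 + j) sy := by
        intro j ς hj sy hsy
        obtain ⟨hB, hA, hC⟩ := hletters j ς hj
        have hjlt : j < tr.length + 1 := by
          by_contra hge
          rw [List.getElem?_eq_none (by omega)] at hj
          cases hj
        rw [Nat.zero_add]
        cases sy with
        | inl b0 =>
          show b0 = (confAt M rsteps j).1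
          cases j with
          | zero => exact hB b0 hsy
          | succ k =>
            have hk : k < tr.length := by omega
            have htrk : tr[k]? = some tr[k] := List.getElem?_eq_getElem hk
            have := hcorr k
            rw [htrk] at this
            obtain ⟨t, ht, ht2⟩ := Option.map_eq_some_iff.mp this
            have hteq : t.1 = tr[k].1 ∧ t.2.1 = tr[k].2.1 := by
              have h1 := congrArg Prod.fst ht2
              have h2 := congrArg Prod.snd ht2
              exact ⟨h1, h2⟩
            have hb0 := hB b0 hsy
            simp only [stAt, htrk] at hb0
            simp only [confAt, ht]
            simp only [Option.map_some, Option.getD_some] at hb0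
            rw [hb0]
            exact hteq.2.symm
        | inr sy2 =>
          cases sy2 with
          | inl a0 =>
            show 1 ≤ j ∧ ∃ t, rsteps[j-1]? = some t ∧ t.1 = a0
            obtain ⟨h1, e, he, hea⟩ := hA a0 hsy
            refine ⟨h1, ?_⟩
            have := hcorr (j-1)
            rw [he] at this
            obtain ⟨t, ht, ht2⟩ := Option.map_eq_some_iff.mp this
            refine ⟨t, ht, ?_⟩
            have h1' := congrArg Prod.fst ht2
            simpa [hea] using h1'
          | inr cc =>
            show cc.holds (confAt M rsteps j).2
            have hccmem := hC cc hsy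
            cases j with
            | zero => exact hC0cs cc hccmem
            | succ k =>
              have hk : k < tr.length := by omega
              have htrk : tr[k]? = some tr[k] := List.getElem?_eq_getElem hk
              have hcs := hCscs k tr[k] htrk
              simp only [csAt, htrk] at hccmem
              exact hcs cc hccmem
      have := nfaSound M rsteps ws (QF.of ψ) 0 p.2.1
        (by rw [hwslen, hlenR]; omega) hgood hnfa hacc
      exact this
  · -- witness run → product language non-empty
    rintro ⟨steps, hrun, hfin, hsat⟩
    obtain ⟨ws, s', hwslen, hgood, hnfa, hacc⟩ :=
      nfaComplete M steps (steps.length + 1) 0 (by omega) (by omega) ψ hsat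
    have hqcsψ : ∀ q : QF B A X D,
        (Sum.inl (QF.of ψ) : QF B A X D ⊕ Unit) = Sum.inl q → qcs q ⊆ CC := by
      intro q hq
      obtain rfl : q = QF.of ψ := by simpa using hq.symm
      exact hψ
    have hbound := (nfaStepsBound (CC' := CC) hnfa hqcsψ).1
    rcases ws with _ | ⟨ς0, ws2⟩
    · simp at hwslen
    rcases nfaSteps_cases hnfa with ⟨heq, -⟩ | ⟨ςx, ws1x, s1, heq, htr, hrest⟩
    · cases heq
    obtain ⟨rfl, rfl⟩ : ςx = ς0 ∧ ws1x = ws2 := by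
      injection heq with h1 h2; exact ⟨h1.symm, h2.symm⟩
    have hgood0 : ∀ sy ∈ ςx, SymTrue M steps 0 sy := by
      intro sy hsy
      have := hgood 0 ςx (by simp) sy hsy
      simpa using this
    have hC0sub : {cc | Sum.inr (Sum.inr cc) ∈ ςx} ⊆ CC :=
      fun cc hcc => hbound ςx (by simp) cc hcc
    obtain ⟨Q0, hQ0Φ, hQ0eqv⟩ := hhs.1 _ hC0sub
    have hiff : ∀ α : X → D,
        ((extD M).updateSem (fun α => ∀ v, α v = M.a0 v) none α ∧
          ∀ cc, Sum.inr (Sum.inr cc) ∈ ςx → cc.holds α) ↔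
        M.initPred {cc | Sum.inr (Sum.inr cc) ∈ ςx} α := by
      intro α
      constructor
      · rintro ⟨hu, hcs⟩
        obtain ⟨β, hβ, heq2⟩ := (updateSem_ext_none M _ α).mp hu
        exact ⟨fun v => (heq2 v).trans (hβ v), hcs⟩
      · rintro ⟨h1, h2⟩
        exact ⟨(updateSem_ext_none M _ α).mpr ⟨M.a0, fun v => rfl, h1⟩, h2⟩
    have hQ0init : Q0 M.a0 := by
      refine (hQ0eqv M.a0).mpr ⟨fun v => rfl, ?_⟩
      intro cc hcc
      exact hgood0 _ hcc
    have hgood2 : ∀ (k : ℕ) ς, ws1x[k]? = some ς →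
        ∀ sy ∈ ς, SymTrue M steps (0 + 1 + k) sy := by
      intro k ς hk sy hsy
      have := hgood (k+1) ς (by simpa using hk) sy hsy
      simpa [Nat.add_comm] using this
    have hCC2 : ∀ ς ∈ ws1x, ∀ cc, Sum.inr (Sum.inr cc) ∈ ς → cc ∈ CC :=
      fun ς hς cc hcc => hbound ς (by simp [hς]) cc hcc
    obtain ⟨P', hpath⟩ := buildSuffix M CC Φ sim hhs hsimOfEqv steps hrun
      ws1x s1 s' hrest 0 (by simpa using hwslen) hgood2 hCC2 Q0 hQ0Φ hQ0init
    refine ⟨(some (confAt M steps steps.length).1, s', P'),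
      Relation.ReflTransGen.head (b := (some M.init, s1, Q0)) ?_ hpath,
      ⟨(confAt M steps steps.length).1, hfin, rfl⟩, hacc⟩
    -- the dummy first step
    refine ⟨none, M.init, ςx, rfl, rfl, htr, ?_, ?_, ?_, ?_, hQ0Φ⟩
    · intro b0 hb0
      exact hgood0 _ hb0
    · intro a0 ha0
      have h := hgood0 _ ha0
      simp only [SymTrue] at h
      exact absurd h.1 (by omega)
    · refine ⟨M.a0, ?_, ?_⟩
      · exact (updateSem_ext_none M _ M.a0).mpr ⟨M.a0, fun v => rfl, fun v => rfl⟩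
      · intro cc hcc
        exact hgood0 _ hcc
    · exact hsimOfEqv _ _ (fun α => (hQ0eqv α).trans (hiff α).symm)

end DDS
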